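/- arXiv:math/0412340 — 4 statements merged into one kernel-verified Lean document; each statement's English description precedes it below -/
import Mathlib

section
/- If a Stieltjes moment sequence (uₙ) factors as uₙ = sₙ tₙ where (sₙ) and (tₙ) are Stieltjes moment sequences, tₙ > 0 for all n, and (sₙ) is S-indeterminate, then (uₙ) is S-indeterminate. -/
open MeasureTheory

/-- `μ` is a measure on `[0,∞)` representing the Stieltjes moment sequence `s`. -/
def IsStieltjesRepr (μ : Measure ℝ) (s : ℕ → ℝ) : Prop :=
  μ (Set.Iio 0) = 0 ∧
    ∀ n : ℕ, Integrable (fun x => x ^ n) μ ∧ s n = ∫ x, x ^ n ∂μ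

/-- `s` is a Stieltjes moment sequence. -/
def IsStieltjesMomentSeq (s : ℕ → ℝ) : Prop :=
  ∃ μ : Measure ℝ, IsStieltjesRepr μ s

/-- A Stieltjes moment sequence is S-indeterminate if at least two different
measures on `[0,∞)` represent it. -/
def SIndeterminate (s : ℕ → ℝ) : Prop :=
  ∃ μ ν : Measure ℝ, IsStieltjesRepr μ s ∧ IsStieltjesRepr ν s ∧ μ ≠ ν

set_option linter.unusedVariables false
set_option linter.unusedTactic false
set_option linter.unreachableTactic false
set_option linter.unusedSectionVars false

namespace SP

open Real Set Filter Nat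
open scoped Topology ENNReal NNReal


lemma pow_le_factorial_mul_exp {x : ℝ} (hx : 0 ≤ x) (k : ℕ) :
    x ^ k ≤ (k ! : ℝ) * Real.exp x := by
  have h1 : x ^ k / (k ! : ℝ) ≤ Real.exp x := by
    calc x ^ k / (k ! : ℝ) ≤ ∑ i ∈ Finset.range (k+1), x ^ i / i ! :=
          Finset.single_le_sum (f := fun i => x ^ i / (i ! : ℝ))
            (fun i _ => by positivity) (Finset.self_mem_range_succ k)
      _ ≤ Real.exp x := Real.sum_le_exp_of_nonneg hx _
  have hk : (0:ℝ) < (k ! : ℝ) := by positivity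
  rw [div_le_iff₀ hk] at h1
  linarith

lemma abs_pow_le (τ : ℝ) (hτ : 0 < τ) (k : ℕ) (y : ℝ) :
    |y| ^ k ≤ (k ! : ℝ) * (2/τ) ^ k * Real.exp (τ/2 * |y|) := by
  have h0 : (0:ℝ) ≤ τ/2 * |y| := by positivity
  have h1 := pow_le_factorial_mul_exp h0 k
  have h2 : (τ/2 * |y|) ^ k = (τ/2) ^ k * |y| ^ k := mul_pow _ _ _
  have h3 : (0:ℝ) < (τ/2) ^ k := by positivity
  have h4 : |y| ^ k ≤ (k ! : ℝ) * Real.exp (τ/2 * |y|) / (τ/2) ^ k := by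
    rw [le_div_iff₀ h3]
    calc |y| ^ k * (τ/2) ^ k = (τ/2 * |y|) ^ k := by rw [h2]; ring
      _ ≤ (k ! : ℝ) * Real.exp (τ/2 * |y|) := h1
  calc |y| ^ k ≤ (k ! : ℝ) * Real.exp (τ/2 * |y|) / (τ/2) ^ k := h4
    _ = (k ! : ℝ) * (2/τ) ^ k * Real.exp (τ/2 * |y|) := by
        rw [div_eq_mul_inv, ← inv_pow]
        have : ((τ/2 : ℝ))⁻¹ = 2/τ := by field_simp
        rw [this]; ring

lemma abs_pow_mul_exp_le (τ : ℝ) (hτ : 0 < τ) (k : ℕ) (y : ℝ) :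
    |y| ^ k * Real.exp (τ * y) ≤
      (k ! : ℝ) * (2/τ) ^ k * (Real.exp (3*τ/2 * y) + Real.exp (τ/2 * y)) := by
  have h1 := abs_pow_le τ hτ k y
  have hpos : (0:ℝ) < Real.exp (τ * y) := Real.exp_pos _
  have h2 : |y| ^ k * Real.exp (τ * y) ≤
      (k ! : ℝ) * (2/τ) ^ k * (Real.exp (τ/2 * |y|) * Real.exp (τ * y)) := by
    calc |y| ^ k * Real.exp (τ * y)
        ≤ ((k ! : ℝ) * (2/τ) ^ k * Real.exp (τ/2 * |y|)) * Real.exp (τ * y) :=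
          mul_le_mul_of_nonneg_right h1 hpos.le
      _ = (k ! : ℝ) * (2/τ) ^ k * (Real.exp (τ/2 * |y|) * Real.exp (τ * y)) := by ring
  refine h2.trans ?_
  have hC : (0:ℝ) ≤ (k ! : ℝ) * (2/τ) ^ k := by positivity
  refine mul_le_mul_of_nonneg_left ?_ hC
  rw [← Real.exp_add]
  rcases abs_cases y with ⟨hy, _⟩ | ⟨hy, _⟩
  · rw [hy]
    have : τ/2 * y + τ * y = 3*τ/2 * y := by ring
    rw [this]
    exact le_add_of_nonneg_right (Real.exp_pos _).le
  · rw [hy]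
    have : τ/2 * (-y) + τ * y = τ/2 * y := by ring
    rw [this]
    exact le_add_of_nonneg_left (Real.exp_pos _).le

variable {w : Measure ℝ} [IsFiniteMeasure w]

lemma integrable_abs_pow_mul_exp
    (hw : ∀ τ : ℝ, 0 < τ → Integrable (fun y => Real.exp (τ * y)) w)
    (k : ℕ) {τ : ℝ} (hτ : 0 < τ) :
    Integrable (fun y => |y| ^ k * Real.exp (τ * y)) w := by
  have hb : Integrable
      (fun y => (k ! : ℝ) * (2/τ) ^ k * (Real.exp (3*τ/2 * y) + Real.exp (τ/2 * y))) w :=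
    ((hw _ (by positivity)).add (hw _ (by positivity))).const_mul _
  refine hb.mono' ?_ ?_
  · exact ((continuous_abs.pow k).mul
      (Real.continuous_exp.comp (continuous_const.mul continuous_id))).aestronglyMeasurable
  · filter_upwards with y
    rw [Real.norm_eq_abs, abs_of_nonneg (by positivity)]
    exact abs_pow_mul_exp_le τ hτ k y

lemma moment_bound
    (hw : ∀ τ : ℝ, 0 < τ → Integrable (fun y => Real.exp (τ * y)) w) (m : ℕ) :
    ∫ y, |y| ^ m * Real.exp y ∂w ≤
      (m ! : ℝ) * 2 ^ m * ∫ y, (Real.exp (3/2 * y) + Real.exp (1/2 * y)) ∂w := by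
  have hint := integrable_abs_pow_mul_exp hw m one_pos
  have hint2 : Integrable (fun y => Real.exp (3/2 * y) + Real.exp (1/2 * y)) w :=
    (hw _ (by norm_num)).add (hw _ (by norm_num))
  calc ∫ y, |y| ^ m * Real.exp y ∂w
      ≤ ∫ y, (m ! : ℝ) * 2 ^ m * (Real.exp (3/2 * y) + Real.exp (1/2 * y)) ∂w := by
        refine integral_mono (by simpa using hint) (hint2.const_mul _) ?_
        intro y
        have h := abs_pow_mul_exp_le 1 one_pos m y
        norm_num at h
        convert h using 2 <;> norm_num
    _ = (m ! : ℝ) * 2 ^ m * ∫ y, (Real.exp (3/2 * y) + Real.exp (1/2 * y)) ∂w :=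
        integral_const_mul _ _



noncomputable def G (b c : ℝ) : ℝ := ∫ u in Ici c, Real.exp (-(b*u^2))

variable {b c : ℝ}

lemma integrable_gauss (hb : 0 < b) : Integrable (fun u : ℝ => Real.exp (-(b*u^2))) := by
  simpa [neg_mul] using integrable_exp_neg_mul_sq hb

lemma gauss_total (hb : 0 < b) : ∫ u : ℝ, Real.exp (-(b*u^2)) = Real.sqrt (π/b) := by
  simpa [neg_mul] using integral_gaussian b

lemma G_nonneg : 0 ≤ G b c :=
  setIntegral_nonneg measurableSet_Ici (fun _ _ => (Real.exp_pos _).le)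

lemma G_le (hb : 0 < b) : G b c ≤ Real.sqrt (π/b) :=
  (setIntegral_le_integral (integrable_gauss hb)
    (ae_of_all _ (fun _ => (Real.exp_pos _).le))).trans_eq (gauss_total hb)

lemma G_anti (hb : 0 < b) : Antitone (G b) := by
  intro x y hxy
  exact setIntegral_mono_set (integrable_gauss hb).integrableOn
    (ae_of_all _ (fun _ => (Real.exp_pos _).le))
    (HasSubset.Subset.eventuallyLE (Ici_subset_Ici.2 hxy))

lemma G_eq (hb : 0 < b) (c : ℝ) : G b c = Real.sqrt (π/b) - G b (-c) := by
  have hsplit : G b c + ∫ u in Iio c, Real.exp (-(b*u^2)) = Real.sqrt (π/b) := by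
    have h := integral_add_compl (measurableSet_Ici (a := c)) (integrable_gauss hb)
    rw [compl_Ici] at h
    rw [← gauss_total hb]
    exact h
  have hneg : ∫ u in Iio c, Real.exp (-(b*u^2)) = G b (-c) := by
    have h := integral_comp_neg_Ioi (c := -c) (f := fun u : ℝ => Real.exp (-(b*u^2)))
    simp only [neg_neg, neg_sq] at h
    rw [← integral_Iic_eq_integral_Iio, ← h, G, integral_Ici_eq_integral_Ioi]
  linarith [hsplit, hneg ▸ hsplit]

lemma G_zero (hb : 0 < b) : G b 0 = Real.sqrt (π/b) / 2 := by
  have h := G_eq hb 0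
  rw [neg_zero] at h
  linarith

lemma G_tail (hb : 0 < b) (hc : 0 < c) :
    G b c ≤ Real.exp (-(b/2*c^2)) * Real.sqrt (π/(b/2)) := by
  have h1 : G b c ≤ ∫ u in Ici c, Real.exp (-(b/2*c^2)) * Real.exp (-(b/2*u^2)) := by
    refine setIntegral_mono_on (integrable_gauss hb).integrableOn
      (((integrable_gauss (half_pos hb)).const_mul _).integrableOn) measurableSet_Ici ?_
    intro u hu
    rw [← Real.exp_add]
    apply Real.exp_le_exp.2
    have hcu : c ≤ u := hu
    have hc2 : c^2 ≤ u^2 := by nlinarith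
    nlinarith [mul_le_mul_of_nonneg_left hc2 (le_of_lt (half_pos hb))]
  refine h1.trans ?_
  rw [integral_const_mul]
  exact mul_le_mul_of_nonneg_left (G_le (half_pos hb)) (Real.exp_pos _).le

lemma sqrtZ_pos (n : ℕ) : 0 < Real.sqrt (π/((n:ℝ)+1)) := by
  apply Real.sqrt_pos.2
  positivity

lemma ratio_lim (hc : 0 < c) :
    Tendsto (fun n : ℕ => G ((n:ℝ)+1) c / Real.sqrt (π/((n:ℝ)+1))) atTop (𝓝 0) := by
  have key : ∀ n : ℕ, G ((n:ℝ)+1) c / Real.sqrt (π/((n:ℝ)+1))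
      ≤ Real.sqrt 2 * Real.exp (-(c^2/2)) ^ (n+1) := by
    intro n
    have hb : (0:ℝ) < (n:ℝ)+1 := by positivity
    have h1 := G_tail hb hc
    have h2 : Real.sqrt (π/(((n:ℝ)+1)/2)) = Real.sqrt 2 * Real.sqrt (π/((n:ℝ)+1)) := by
      rw [← Real.sqrt_mul (by norm_num : (0:ℝ) ≤ 2)]
      congr 1
      field_simp
    have h3 : Real.exp (-(((n:ℝ)+1)/2*c^2)) = Real.exp (-(c^2/2)) ^ (n+1) := by
      rw [← Real.exp_nat_mul]
      congr 1
      push_cast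
      ring
    rw [div_le_iff₀ (sqrtZ_pos n)]
    calc G ((n:ℝ)+1) c ≤ Real.exp (-(((n:ℝ)+1)/2*c^2)) * Real.sqrt (π/(((n:ℝ)+1)/2)) := h1
      _ = Real.sqrt 2 * Real.exp (-(c^2/2)) ^ (n+1) * Real.sqrt (π/((n:ℝ)+1)) := by
          rw [h2, h3]; ring
  have hlim : Tendsto (fun n : ℕ => Real.sqrt 2 * Real.exp (-(c^2/2)) ^ (n+1)) atTop (𝓝 0) := by
    have hr0 : (0:ℝ) ≤ Real.exp (-(c^2/2)) := (Real.exp_pos _).le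
    have hr1 : Real.exp (-(c^2/2)) < 1 := Real.exp_lt_one_iff.2 (by nlinarith)
    have h := (tendsto_pow_atTop_nhds_zero_of_lt_one hr0 hr1).comp
      (tendsto_add_atTop_nat 1)
    have := h.const_mul (Real.sqrt 2)
    rw [mul_zero] at this
    exact this
  exact squeeze_zero (fun n => div_nonneg G_nonneg (Real.sqrt_nonneg _)) key hlim

noncomputable def L (a y : ℝ) : ℝ :=
  indicator (Iio a) (fun _ => (1:ℝ)) y + indicator {a} (fun _ => (1/2:ℝ)) y

lemma L_lim (a y : ℝ) :
    Tendsto (fun n : ℕ => G ((n:ℝ)+1) (y - a) / Real.sqrt (π/((n:ℝ)+1))) atTop (𝓝 (L a y)) := by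
  rcases lt_trichotomy y a with hy | hy | hy
  · have hL : L a y = 1 := by simp [L, hy, ne_of_lt hy]
    rw [hL]
    have hcongr : ∀ n : ℕ, G ((n:ℝ)+1) (y - a) / Real.sqrt (π/((n:ℝ)+1))
        = 1 - G ((n:ℝ)+1) (a - y) / Real.sqrt (π/((n:ℝ)+1)) := by
      intro n
      have hb : (0:ℝ) < (n:ℝ)+1 := by positivity
      have h := G_eq hb (y - a)
      have : -(y - a) = a - y := by ring
      rw [this] at h
      rw [h, sub_div, div_self (ne_of_gt (sqrtZ_pos n))]
    have h0 := ratio_lim (show 0 < a - y by linarith)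
    have := h0.const_sub 1
    rw [sub_zero] at this
    exact Tendsto.congr (fun n => (hcongr n).symm) this
  · have hL : L a y = 1/2 := by simp [L, hy]
    rw [hL, hy]
    have hcongr : ∀ n : ℕ, G ((n:ℝ)+1) (a - a) / Real.sqrt (π/((n:ℝ)+1)) = 1/2 := by
      intro n
      have hb : (0:ℝ) < (n:ℝ)+1 := by positivity
      rw [sub_self, G_zero hb]
      field_simp
    rw [show (1:ℝ)/2 = 1/2 from rfl]
    exact Tendsto.congr (fun n => (hcongr n).symm) tendsto_const_nhds
  · have hL : L a y = 0 := by simp [L, not_lt.2 hy.le, ne_of_gt hy]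
    rw [hL]
    exact ratio_lim (show 0 < y - a by linarith)



variable {P Q : Measure ℝ} [IsFiniteMeasure P] [IsFiniteMeasure Q] {b : ℝ}

lemma smooth_formula (R : Measure ℝ) [IsFiniteMeasure R] (hb : 0 < b) (x : ℝ) :
    (∫ t : ℝ, Complex.exp (-((((4*b)⁻¹:ℝ)):ℂ)*t^2 + Complex.I*(-x)*t) *
        (∫ y, Complex.exp (t*y*Complex.I) ∂ R))
      = (((π/((4*b)⁻¹:ℝ)):ℝ):ℂ)^(1/2:ℂ) *
        ((∫ y, Real.exp (-(b*(y-x)^2)) ∂ R : ℝ) : ℂ) := by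
  set ε : ℝ := (4*b)⁻¹ with hεdef
  have hε : 0 < ε := by positivity
  have hcont : Continuous (Function.uncurry fun (t y : ℝ) =>
      Complex.exp (-(ε:ℂ)*t^2 + Complex.I*((y:ℂ)-x)*t)) := by
    apply Complex.continuous_exp.comp
    fun_prop
  have hint : Integrable (Function.uncurry fun (t y : ℝ) =>
      Complex.exp (-(ε:ℂ)*t^2 + Complex.I*((y:ℂ)-x)*t)) (volume.prod R) := by
    have hbound : Integrable (fun z : ℝ × ℝ => Real.exp (-ε * z.1^2) * 1) (volume.prod R) :=
      (integrable_exp_neg_mul_sq hε).mul_prod (integrable_const (1:ℝ))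
    refine hbound.mono' hcont.aestronglyMeasurable ?_
    filter_upwards with z
    simp only [Function.uncurry]
    rw [Complex.norm_exp]
    have : (-(ε:ℂ)*z.1^2 + Complex.I*((z.2:ℂ)-x)*z.1).re = -ε * z.1^2 := by
      simp [Complex.add_re, Complex.mul_re, Complex.I_re, Complex.I_im, ← Complex.ofReal_pow]
    rw [this, mul_one]
  calc (∫ t : ℝ, Complex.exp (-(ε:ℂ)*t^2 + Complex.I*(-x)*t) *
          (∫ y, Complex.exp (t*y*Complex.I) ∂ R))
      = ∫ t : ℝ, ∫ y, Complex.exp (-(ε:ℂ)*t^2 + Complex.I*((y:ℂ)-x)*t) ∂ R := by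
        congr 1
        ext t
        rw [← integral_const_mul]
        congr 1
        ext y
        rw [← Complex.exp_add]
        congr 1
        push_cast
        ring
    _ = ∫ y, ∫ t : ℝ, Complex.exp (-(ε:ℂ)*t^2 + Complex.I*((y:ℂ)-x)*t) ∂(volume) ∂ R :=
        integral_integral_swap hint
    _ = ∫ y, (((π/ε:ℝ):ℂ))^(1/2:ℂ) * Complex.exp (-((y:ℂ)-x)^2/(4*(ε:ℂ))) ∂ R := by
        congr 1
        ext y
        have h := fourierIntegral_gaussian (b := (ε:ℂ))
          (by simpa using hε) ((y:ℂ) - x)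
        rw [Complex.ofReal_div, ← h]
        congr 1
        ext t
        rw [← Complex.exp_add]
        congr 1
        push_cast
        ring
    _ = (((π/ε:ℝ):ℂ))^(1/2:ℂ) * ((∫ y, Real.exp (-(b*(y-x)^2)) ∂ R : ℝ) : ℂ) := by
        rw [integral_const_mul]
        congr 1
        have hrw : ∀ y : ℝ, Complex.exp (-((y:ℂ)-x)^2/(4*(ε:ℂ)))
            = ((Real.exp (-(b*(y-x)^2)) : ℝ) : ℂ) := by
          intro y
          rw [Complex.ofReal_exp]
          congr 1
          have hre : (4:ℝ)*ε = b⁻¹ := by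
            rw [hεdef]
            field_simp
          have h4ε : (4*(ε:ℂ)) = ((b:ℂ))⁻¹ := by exact_mod_cast congrArg Complex.ofReal hre
          rw [h4ε, div_eq_mul_inv, inv_inv]
          push_cast
          ring
        simp_rw [hrw]
        exact integral_ofReal
  
lemma smoothed_eq
    (h : ∀ t : ℝ, ∫ y, Complex.exp (t*y*Complex.I) ∂P = ∫ y, Complex.exp (t*y*Complex.I) ∂Q)
    (hb : 0 < b) (x : ℝ) :
    ∫ y, Real.exp (-(b*(y-x)^2)) ∂P = ∫ y, Real.exp (-(b*(y-x)^2)) ∂Q := by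
  have hJ : (∫ t : ℝ, Complex.exp (-((((4*b)⁻¹:ℝ)):ℂ)*t^2 + Complex.I*(-x)*t) *
        (∫ y, Complex.exp (t*y*Complex.I) ∂P))
      = (∫ t : ℝ, Complex.exp (-((((4*b)⁻¹:ℝ)):ℂ)*t^2 + Complex.I*(-x)*t) *
        (∫ y, Complex.exp (t*y*Complex.I) ∂Q)) := by
    congr 1
    ext t
    rw [h t]
  rw [smooth_formula P hb x, smooth_formula Q hb x] at hJ
  have hεpos : (0:ℝ) < (4*b)⁻¹ := by positivity
  have hne : ((((π/((4*b)⁻¹:ℝ)):ℝ)):ℂ)^(1/2:ℂ) ≠ 0 := by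
    rw [Ne, Complex.cpow_eq_zero_iff]
    push_neg
    intro hzero
    exfalso
    have : ((π/((4*b)⁻¹:ℝ)):ℝ) ≠ 0 := by positivity
    exact this (by exact_mod_cast hzero)
  have := mul_left_cancel₀ hne hJ
  exact_mod_cast this

lemma translate_gauss (hb : 0 < b) (y a : ℝ) :
    ∫ x in Iic a, Real.exp (-(b*(y-x)^2)) = G b (y - a) := by
  rw [← integral_indicator measurableSet_Iic]
  have h := integral_sub_left_eq_self
    (fun x => indicator (Iic a) (fun x' => Real.exp (-(b*(y-x')^2))) x) (volume : Measure ℝ) y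
  rw [← h]
  have hfun : ∀ u : ℝ, indicator (Iic a) (fun x' => Real.exp (-(b*(y-x')^2))) (y - u)
      = indicator (Ici (y - a)) (fun u : ℝ => Real.exp (-(b*u^2))) u := by
    intro u
    simp only [indicator_apply, mem_Iic, mem_Ici]
    have hiff : y - u ≤ a ↔ y - a ≤ u := by constructor <;> intro <;> linarith
    have hval : Real.exp (-(b*(y-(y-u))^2)) = Real.exp (-(b*u^2)) := by
      congr 2
      ring
    rw [if_congr hiff hval rfl]
  simp_rw [hfun]
  rw [integral_indicator measurableSet_Ici]
  rfl


lemma integrable_gauss_shift (hb : 0 < b) (y : ℝ) :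
    Integrable (fun x : ℝ => Real.exp (-(b*(y-x)^2))) := by
  have h := (integrable_gauss hb).comp_sub_right y
  refine h.congr ?_
  filter_upwards with x
  congr 1
  ring

lemma smoothed_Iic
    (h : ∀ t : ℝ, ∫ y, Complex.exp (t*y*Complex.I) ∂P = ∫ y, Complex.exp (t*y*Complex.I) ∂Q)
    (hb : 0 < b) (a : ℝ) :
    ∫ y, G b (y - a) ∂P = ∫ y, G b (y - a) ∂Q := by
  have key : ∀ (R : Measure ℝ) [IsFiniteMeasure R],
      ∫ y, G b (y - a) ∂ R
        = ∫ x in Iic a, (∫ y, Real.exp (-(b*(y-x)^2)) ∂ R) := by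
    intro R hR
    have hmeas : AEStronglyMeasurable
        (Function.uncurry fun (y x : ℝ) => Real.exp (-(b*(y-x)^2)))
        (R.prod (volume.restrict (Iic a))) := by
      apply Continuous.aestronglyMeasurable
      apply Real.continuous_exp.comp
      fun_prop
    have hint : Integrable (Function.uncurry fun (y x : ℝ) => Real.exp (-(b*(y-x)^2)))
        (R.prod (volume.restrict (Iic a))) := by
      rw [integrable_prod_iff hmeas]
      simp only [Function.uncurry]
      have hG : ∀ y : ℝ, ∫ x in Iic a, ‖Real.exp (-(b*(y-x)^2))‖ = G b (y - a) := by
        intro y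
        rw [← translate_gauss hb y a]
        congr 1
        ext x
        exact norm_of_nonneg (Real.exp_pos _).le
      constructor
      · filter_upwards with y
        exact (integrable_gauss_shift hb y).integrableOn
      · have hfun : (fun y => ∫ x in Iic a, ‖Real.exp (-(b*(y-x)^2))‖)
            = fun y => G b (y - a) := funext hG
        rw [hfun]
        refine (integrable_const (Real.sqrt (π/b))).mono' ?_ ?_
        · exact ((G_anti hb).measurable.comp
            (measurable_id.sub measurable_const)).aestronglyMeasurable
        · filter_upwards with y
          rw [norm_of_nonneg G_nonneg]
          exact G_le hb
    have hswap := integral_integral_swap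
      (f := fun (y x : ℝ) => Real.exp (-(b*(y-x)^2))) hint
    calc ∫ y, G b (y - a) ∂ R
        = ∫ y, (∫ x in Iic a, Real.exp (-(b*(y-x)^2))) ∂ R := by
          congr 1
          ext y
          rw [translate_gauss hb y a]
      _ = ∫ x in Iic a, (∫ y, Real.exp (-(b*(y-x)^2)) ∂ R) := hswap
  rw [key P, key Q]
  apply setIntegral_congr_fun measurableSet_Iic
  intro x _
  exact smoothed_eq h hb x

noncomputable def Fm (R : Measure ℝ) (a : ℝ) : ℝ := (R (Iio a)).toReal + (R {a}).toReal / 2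

lemma integral_L (R : Measure ℝ) [IsFiniteMeasure R] (a : ℝ) :
    ∫ y, L a y ∂ R = Fm R a := by
  unfold L Fm
  rw [integral_add ((integrable_const (1:ℝ)).indicator measurableSet_Iio)
    ((integrable_const ((1:ℝ)/2)).indicator (measurableSet_singleton a))]
  rw [integral_indicator_const _ measurableSet_Iio,
      integral_indicator_const _ (measurableSet_singleton a)]
  simp [smul_eq_mul]
  rfl

lemma Fm_eq
    (h : ∀ t : ℝ, ∫ y, Complex.exp (t*y*Complex.I) ∂P = ∫ y, Complex.exp (t*y*Complex.I) ∂Q)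
    (a : ℝ) : Fm P a = Fm Q a := by
  set fn : ℕ → ℝ → ℝ := fun n y => G ((n:ℝ)+1) (y - a) / Real.sqrt (π/((n:ℝ)+1)) with hfn
  have hmeas : ∀ (n : ℕ), AEStronglyMeasurable (fn n) P ∧ AEStronglyMeasurable (fn n) Q := by
    intro n
    have hb : (0:ℝ) < (n:ℝ)+1 := by positivity
    have : Measurable (fn n) :=
      ((G_anti hb).measurable.comp (measurable_id.sub measurable_const)).div_const _
    exact ⟨this.aestronglyMeasurable, this.aestronglyMeasurable⟩
  have hbound : ∀ (R : Measure ℝ), ∀ n : ℕ, ∀ᵐ (y:ℝ) ∂ R, ‖fn n y‖ ≤ (1:ℝ) := by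
    intro R n
    filter_upwards with y
    have hb : (0:ℝ) < (n:ℝ)+1 := by positivity
    rw [hfn, norm_of_nonneg (div_nonneg G_nonneg (Real.sqrt_nonneg _))]
    rw [div_le_one (sqrtZ_pos n)]
    exact G_le hb
  have hP : Tendsto (fun n => ∫ y, fn n y ∂P) atTop (𝓝 (∫ y, L a y ∂P)) := by
    apply tendsto_integral_of_dominated_convergence (bound := fun _ => (1:ℝ))
    · exact fun n => (hmeas n).1
    · exact integrable_const 1
    · exact hbound P
    · exact ae_of_all _ (fun y => L_lim a y)
  have hQ : Tendsto (fun n => ∫ y, fn n y ∂Q) atTop (𝓝 (∫ y, L a y ∂Q)) := by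
    apply tendsto_integral_of_dominated_convergence (bound := fun _ => (1:ℝ))
    · exact fun n => (hmeas n).2
    · exact integrable_const 1
    · exact hbound Q
    · exact ae_of_all _ (fun y => L_lim a y)
  have heq : ∀ n : ℕ, ∫ y, fn n y ∂P = ∫ y, fn n y ∂Q := by
    intro n
    have hb : (0:ℝ) < (n:ℝ)+1 := by positivity
    rw [hfn]
    simp only
    rw [integral_div, integral_div, smoothed_Iic h hb a]
  have hQ' : Tendsto (fun n => ∫ y, fn n y ∂P) atTop (𝓝 (∫ y, L a y ∂Q)) := by
    exact Tendsto.congr (fun n => (heq n).symm) hQ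
  have := tendsto_nhds_unique hP hQ'
  rw [integral_L P a, integral_L Q a] at this
  exact this

theorem ext_of_integral_expI_eq
    (h : ∀ t : ℝ, ∫ y, Complex.exp (t*y*Complex.I) ∂P = ∫ y, Complex.exp (t*y*Complex.I) ∂Q) :
    P = Q := by
  refine Measure.ext_of_Iic P Q (fun a => ?_)
  have hseq : ∀ (R : Measure ℝ) [IsFiniteMeasure R],
      Tendsto (fun n : ℕ => Fm R (a + 1/((n:ℝ)+1))) atTop (𝓝 ((R (Iic a)).toReal)) := by
    intro R hR
    have hIic : Tendsto (fun n : ℕ => (R (Iic (a + 1/((n:ℝ)+1)))).toReal) atTop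
        (𝓝 ((R (Iic a)).toReal)) := by
      have hInter : ⋂ n : ℕ, Iic (a + 1/((n:ℝ)+1)) = Iic a := by
        ext y
        simp only [mem_iInter, mem_Iic]
        constructor
        · intro hy
          by_contra hya
          push_neg at hya
          obtain ⟨n, hn⟩ := exists_nat_one_div_lt (show (0:ℝ) < y - a by linarith)
          have h2 := hy n
          linarith
        · intro hy n
          have : (0:ℝ) < 1/((n:ℝ)+1) := by positivity
          linarith
      have hanti : Antitone (fun n : ℕ => Iic (a + 1/((n:ℝ)+1))) := by
        intro m n hmn
        apply Iic_subset_Iic.2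
        have : 1/((n:ℝ)+1) ≤ 1/((m:ℝ)+1) := by
          apply one_div_le_one_div_of_le (by positivity)
          push_cast
          linarith [(Nat.cast_le (α := ℝ)).2 hmn]
        linarith
      have htend := tendsto_measure_iInter_atTop (fun n => measurableSet_Iic.nullMeasurableSet)
        hanti ⟨0, measure_ne_top R _⟩
      rw [hInter] at htend
      exact (ENNReal.tendsto_toReal (measure_ne_top R _)).comp htend
    have hlow : ∀ n : ℕ, (R (Iic a)).toReal ≤ Fm R (a + 1/((n:ℝ)+1)) := by
      intro n
      have hlt : a < a + 1/((n:ℝ)+1) := by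
        have : (0:ℝ) < 1/((n:ℝ)+1) := by positivity
        linarith
      have h1 : R (Iic a) ≤ R (Iio (a + 1/((n:ℝ)+1))) := measure_mono (fun y hy => lt_of_le_of_lt hy hlt)
      have h2 : (R (Iic a)).toReal ≤ (R (Iio (a + 1/((n:ℝ)+1)))).toReal :=
        ENNReal.toReal_mono (measure_ne_top R _) h1
      unfold Fm
      have : (0:ℝ) ≤ (R {a + 1/((n:ℝ)+1)}).toReal / 2 := by positivity
      linarith
    have hhigh : ∀ n : ℕ, Fm R (a + 1/((n:ℝ)+1)) ≤ (R (Iic (a + 1/((n:ℝ)+1)))).toReal := by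
      intro n
      set c := a + 1/((n:ℝ)+1)
      have hsplit : R (Iic c) = R (Iio c) + R {c} := by
        rw [← Iio_union_right, measure_union ?_ (measurableSet_singleton c)]
        · exact disjoint_singleton_right.mpr (by simp)
      rw [hsplit, ENNReal.toReal_add (measure_ne_top R _) (measure_ne_top R _)]
      unfold Fm
      have : (0:ℝ) ≤ (R {c}).toReal := ENNReal.toReal_nonneg
      linarith
    refine tendsto_of_tendsto_of_tendsto_of_le_of_le tendsto_const_nhds hIic hlow hhigh
  have hP := hseq P
  have hQ' : Tendsto (fun n : ℕ => Fm P (a + 1/((n:ℝ)+1))) atTop (𝓝 ((Q (Iic a)).toReal)) := by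
    refine Tendsto.congr (fun n => (Fm_eq h _).symm) (hseq Q)
  have heq := tendsto_nhds_unique hP hQ'
  exact (ENNReal.toReal_eq_toReal_iff' (measure_ne_top P _) (measure_ne_top Q _)).1 heq


variable {w : Measure ℝ} [IsFiniteMeasure w]




lemma hasDerivAt_momA
    (hw : ∀ τ : ℝ, 0 < τ → Integrable (fun y => Real.exp (τ * y)) w)
    (k : ℕ) {σ : ℝ} (hσ : 0 < σ) :
    HasDerivAt (fun τ => ∫ y, y^k * Real.exp (τ*y) ∂w)
      (∫ y, y^(k+1) * Real.exp (σ*y) ∂w) σ := by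
  have hcont : ∀ τ : ℝ, ∀ m : ℕ, AEStronglyMeasurable (fun y : ℝ => y^m * Real.exp (τ*y)) w := by
    intro τ m
    exact ((continuous_pow m).mul
      (Real.continuous_exp.comp (continuous_const.mul continuous_id))).aestronglyMeasurable
  have hintm : ∀ (m : ℕ) {τ : ℝ}, 0 < τ → Integrable (fun y : ℝ => y^m * Real.exp (τ*y)) w := by
    intro m τ hτ
    refine (integrable_abs_pow_mul_exp hw m hτ).mono' (hcont τ m) ?_
    filter_upwards with y
    rw [norm_mul, norm_pow, Real.norm_eq_abs, Real.norm_eq_abs,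
      abs_of_nonneg (Real.exp_pos _).le]
  have key := hasDerivAt_integral_of_dominated_loc_of_deriv_le
    (F := fun τ (y:ℝ) => y^k * Real.exp (τ*y))
    (F' := fun τ (y:ℝ) => y^(k+1) * Real.exp (τ*y))
    (x₀ := σ)
    (bound := fun y => |y|^(k+1) * Real.exp (σ/2*y) + |y|^(k+1) * Real.exp (2*σ*y))
    (Metric.ball_mem_nhds σ (half_pos hσ))
    (Eventually.of_forall (fun τ => hcont τ k))
    (hintm k hσ)
    (hcont σ (k+1))
    ?_ ?_ ?_
  · exact key.2
  · filter_upwards with y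
    intro τ hτ
    rw [Metric.mem_ball, Real.dist_eq, abs_lt] at hτ
    rw [norm_mul, norm_pow, Real.norm_eq_abs, Real.norm_eq_abs,
      abs_of_nonneg (Real.exp_pos _).le]
    rcases le_or_gt 0 y with hy | hy
    · have : Real.exp (τ*y) ≤ Real.exp (2*σ*y) := by
        apply Real.exp_le_exp.2
        nlinarith
      nlinarith [pow_nonneg (abs_nonneg y) (k+1), Real.exp_pos (σ/2*y), Real.exp_pos (τ*y),
        mul_le_mul_of_nonneg_left this (pow_nonneg (abs_nonneg y) (k+1))]
    · have : Real.exp (τ*y) ≤ Real.exp (σ/2*y) := by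
        apply Real.exp_le_exp.2
        nlinarith
      nlinarith [pow_nonneg (abs_nonneg y) (k+1), Real.exp_pos (2*σ*y), Real.exp_pos (τ*y),
        mul_le_mul_of_nonneg_left this (pow_nonneg (abs_nonneg y) (k+1))]
  · exact (integrable_abs_pow_mul_exp hw (k+1) (half_pos hσ)).add
      (integrable_abs_pow_mul_exp hw (k+1) (by linarith))
  · filter_upwards with y
    intro τ _
    have hexp : HasDerivAt (fun τ : ℝ => Real.exp (τ*y)) (Real.exp (τ*y)*y) τ :=
      (hasDerivAt_mul_const y).exp
    have := hexp.const_mul (y^k)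
    exact this.congr_deriv (by ring)
 
lemma momA_eq {p q : Measure ℝ} [IsFiniteMeasure p] [IsFiniteMeasure q]
    (hp : ∀ τ : ℝ, 0 < τ → Integrable (fun y => Real.exp (τ * y)) p)
    (hq : ∀ τ : ℝ, 0 < τ → Integrable (fun y => Real.exp (τ * y)) q)
    (hV : ∀ σ : ℝ, 0 < σ → ∫ y, Real.exp (σ*y) ∂p = ∫ y, Real.exp (σ*y) ∂q) :
    ∀ k : ℕ, ∀ σ : ℝ, 0 < σ → ∫ y, y^k * Real.exp (σ*y) ∂p = ∫ y, y^k * Real.exp (σ*y) ∂q := by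
  intro k
  induction k with
  | zero =>
    intro σ hσ
    simpa using hV σ hσ
  | succ k ih =>
    intro σ hσ
    have h1 := hasDerivAt_momA hp k hσ
    have h2 := hasDerivAt_momA hq k hσ
    have heq : (fun τ => ∫ y, y^k * Real.exp (τ*y) ∂p)
        =ᶠ[𝓝 σ] (fun τ => ∫ y, y^k * Real.exp (τ*y) ∂q) := by
      filter_upwards [isOpen_Ioi.mem_nhds hσ] with τ hτ
      exact ih τ hτ
    have h2' := h2.congr_of_eventuallyEq heq
    exact h1.unique h2'


-- §c : complex series bootstrap

lemma norm_cpow_exp (k : ℕ) (t : ℝ) (u : ℝ) :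
    ‖(u:ℂ)^k * Complex.exp ((1 + t*Complex.I)*u)‖ = |u|^k * Real.exp u := by
  rw [norm_mul, norm_pow, Complex.norm_real, Real.norm_eq_abs,
    Complex.norm_exp]
  congr 2
  simp [Complex.add_re, Complex.mul_re, Complex.I_re, Complex.I_im]

lemma cexp_cont (k : ℕ) (t : ℝ) :
    Continuous (fun u : ℝ => (u:ℂ)^k * Complex.exp ((1 + t*Complex.I)*u)) := by
  apply Continuous.mul
  · fun_prop
  · exact Complex.continuous_exp.comp (by fun_prop)

lemma c_integrable (hw : ∀ τ : ℝ, 0 < τ → Integrable (fun y => Real.exp (τ * y)) w)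
    (k : ℕ) (t : ℝ) :
    Integrable (fun u : ℝ => (u:ℂ)^k * Complex.exp ((1 + t*Complex.I)*u)) w := by
  have h0 : Integrable (fun y : ℝ => |y|^k * Real.exp (1*y)) w :=
    integrable_abs_pow_mul_exp hw k one_pos
  simp only [one_mul] at h0
  refine h0.mono' (cexp_cont k t).aestronglyMeasurable ?_
  filter_upwards with u
  rw [norm_cpow_exp]

lemma series_expansion (hw : ∀ τ : ℝ, 0 < τ → Integrable (fun y => Real.exp (τ * y)) w)
    (k : ℕ) (t h : ℝ) (hh : |h| < 4⁻¹) :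
    ∫ u, (u:ℂ)^k * Complex.exp ((1 + (t+h)*Complex.I)*u) ∂w
      = ∑' j : ℕ, (((h:ℂ)*Complex.I)^j / (j ! : ℂ)) *
          ∫ u, (u:ℂ)^(k+j) * Complex.exp ((1 + t*Complex.I)*u) ∂w := by
  set F : ℕ → ℝ → ℂ := fun j u =>
    (((h:ℂ)*Complex.I)^j / (j ! : ℂ)) * ((u:ℂ)^(k+j) * Complex.exp ((1 + t*Complex.I)*u))
    with hF
  have hFi : ∀ j, Integrable (F j) w := fun j => (c_integrable hw (k+j) t).const_mul _
  have hnormF : ∀ j u, ‖F j u‖ = (|h|^j / (j ! : ℝ)) * (|u|^(k+j) * Real.exp u) := by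
    intro j u
    rw [hF]
    simp only
    rw [norm_mul, norm_div, norm_pow, norm_mul, Complex.norm_real, Real.norm_eq_abs,
      Complex.norm_I, mul_one, Complex.norm_natCast, norm_cpow_exp]
  have hD : (0:ℝ) ≤ ∫ y, (Real.exp (3/2 * y) + Real.exp (1/2 * y)) ∂w :=
    integral_nonneg (fun y => by positivity)
  set D : ℝ := ∫ y, (Real.exp (3/2 * y) + Real.exp (1/2 * y)) ∂w with hDdef
  have hfact : ∀ j : ℕ, ((k+j)! : ℝ) ≤ (k ! : ℝ) * (j ! : ℝ) * 2^(k+j) := by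
    intro j
    have h1 : ((k+j).choose j : ℕ) ≤ 2^(k+j) := by
      calc (k+j).choose j ≤ ∑ i ∈ Finset.range (k+j+1), (k+j).choose i :=
            Finset.single_le_sum (fun i _ => Nat.zero_le _)
              (Finset.mem_range.2 (by omega))
        _ = 2^(k+j) := Nat.sum_range_choose (k+j)
    have h2 : (k+j).choose j * k ! * j ! = (k+j)! :=
      Nat.add_choose_mul_factorial_mul_factorial k j
    have h3 : ((k+j)! : ℝ) = ((k+j).choose j : ℝ) * ((k:ℕ)! : ℝ) * ((j:ℕ)! : ℝ) := by
      rw [← h2]; push_cast; ring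
    rw [h3]
    have h4 : (((k+j).choose j : ℕ) : ℝ) ≤ (2:ℝ)^(k+j) := by exact_mod_cast h1
    have : (0:ℝ) ≤ ((k:ℕ)! : ℝ) * ((j:ℕ)! : ℝ) := by positivity
    nlinarith [this, h4]
  have hsum : Summable fun j => ∫ u, ‖F j u‖ ∂w := by
    have hgsum : Summable (fun j : ℕ => (D * (k ! : ℝ) * 4^k) * (4*|h|)^j) :=
      (summable_geometric_of_lt_one (by positivity) (by
        rw [show (1:ℝ) = 4 * 4⁻¹ by norm_num]
        exact (mul_lt_mul_iff_right₀ (by norm_num)).2 hh)).mul_left _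
    refine Summable.of_nonneg_of_le
      (fun j => integral_nonneg (fun u => norm_nonneg _)) (fun j => ?_) hgsum
    · have h1 : ∫ u, ‖F j u‖ ∂w = (|h|^j / (j ! : ℝ)) * ∫ u, |u|^(k+j) * Real.exp u ∂w := by
        simp_rw [hnormF]
        exact integral_const_mul _ _
      rw [h1]
      have h2 := moment_bound hw (k+j)
      have h3 : (0:ℝ) ≤ |h|^j / (j ! : ℝ) := by positivity
      calc (|h|^j / (j ! : ℝ)) * ∫ u, |u|^(k+j) * Real.exp u ∂w
          ≤ (|h|^j / (j ! : ℝ)) * (((k+j)! : ℝ) * 2^(k+j) * D) :=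
            mul_le_mul_of_nonneg_left h2 h3
        _ ≤ (|h|^j / (j ! : ℝ)) * (((k ! : ℝ) * (j ! : ℝ) * 2^(k+j)) * 2^(k+j) * D) := by
            refine mul_le_mul_of_nonneg_left ?_ h3
            have hx : (0:ℝ) ≤ 2^(k+j) * D := by positivity
            calc ((k+j)! : ℝ) * 2^(k+j) * D = ((k+j)! : ℝ) * (2^(k+j) * D) := by ring
              _ ≤ ((k ! : ℝ) * (j ! : ℝ) * 2^(k+j)) * (2^(k+j) * D) :=
                  mul_le_mul_of_nonneg_right (hfact j) hx
              _ = ((k ! : ℝ) * (j ! : ℝ) * 2^(k+j)) * 2^(k+j) * D := by ring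
        _ = (D * (k ! : ℝ) * 4^k) * (4*|h|)^j := by
            have hjf : ((j !:ℕ) : ℝ) ≠ 0 := by positivity
            have h24 : (2:ℝ)^(k+j) * 2^(k+j) = 4^k * 4^j := by
              rw [← pow_add, show (4:ℝ) = 2^2 by norm_num, ← pow_mul, ← pow_mul, ← pow_add]
              congr 1
              ring
            have hcancel : |h|^j / ((j !:ℕ) : ℝ) * ((j !:ℕ) : ℝ) = |h|^j :=
              div_mul_cancel₀ _ hjf
            rw [mul_pow 4 |h| j]
            calc (|h|^j / (j ! : ℝ)) * (((k ! : ℝ) * (j ! : ℝ) * 2^(k+j)) * 2^(k+j) * D)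
                = (|h|^j / ((j !:ℕ) : ℝ) * ((j !:ℕ) : ℝ)) * ((k ! : ℝ) * (2^(k+j) * 2^(k+j)) * D) := by
                  ring
              _ = |h|^j * ((k ! : ℝ) * (4^k * 4^j) * D) := by rw [hcancel, h24]
              _ = D * (k ! : ℝ) * 4^k * (4^j*|h|^j) := by ring
  have hpt : ∀ u : ℝ, (∑' j, F j u) = (u:ℂ)^k * Complex.exp ((1 + (t+h)*Complex.I)*u) := by
    intro u
    have h1 : ∀ j : ℕ, F j u
        = ((u:ℂ)^k * Complex.exp ((1 + t*Complex.I)*u)) * (((h:ℂ)*Complex.I*u)^j / (j ! : ℂ)) := by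
      intro j
      rw [hF]
      simp only
      rw [pow_add, mul_pow, mul_pow]
      ring
    simp_rw [h1]
    rw [tsum_mul_left]
    have h2 : (∑' j : ℕ, ((h:ℂ)*Complex.I*(u:ℂ))^j / (j ! : ℂ))
        = Complex.exp ((h:ℂ)*Complex.I*u) := by
      rw [Complex.exp_eq_exp_ℂ, NormedSpace.exp_eq_tsum_div]
    rw [h2, mul_assoc, ← Complex.exp_add]
    congr 2
    ring
  have hswap := integral_tsum_of_summable_integral_norm hFi hsum
  calc ∫ u, (u:ℂ)^k * Complex.exp ((1 + (t+h)*Complex.I)*u) ∂w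
      = ∫ u, (∑' j, F j u) ∂w := by
        congr 1
        ext u
        rw [hpt u]
    _ = ∑' j, ∫ u, F j u ∂w := hswap.symm
    _ = ∑' j : ℕ, (((h:ℂ)*Complex.I)^j / (j ! : ℂ)) *
          ∫ u, (u:ℂ)^(k+j) * Complex.exp ((1 + t*Complex.I)*u) ∂w := by
        congr 1
        ext j
        rw [hF]
        simp only
        exact integral_const_mul _ _


lemma cexp_line_eq {p q : Measure ℝ} [IsFiniteMeasure p] [IsFiniteMeasure q]
    (hp : ∀ τ : ℝ, 0 < τ → Integrable (fun y => Real.exp (τ * y)) p)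
    (hq : ∀ τ : ℝ, 0 < τ → Integrable (fun y => Real.exp (τ * y)) q)
    (hV : ∀ σ : ℝ, 0 < σ → ∫ y, Real.exp (σ*y) ∂p = ∫ y, Real.exp (σ*y) ∂q) :
    ∀ t : ℝ, ∀ k : ℕ,
      ∫ u, (u:ℂ)^k * Complex.exp ((1 + t*Complex.I)*u) ∂p
        = ∫ u, (u:ℂ)^k * Complex.exp ((1 + t*Complex.I)*u) ∂q := by
  have hA := momA_eq hp hq hV
  have hcast : ∀ (w : Measure ℝ) (k : ℕ),
      ∫ u, (u:ℂ)^k * Complex.exp ((1 + (0:ℝ)*Complex.I)*u) ∂w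
        = ((∫ u, u^k * Real.exp (1*u) ∂w : ℝ) : ℂ) := by
    intro w k
    refine Eq.trans ?_ (integral_ofReal (𝕜 := ℂ))
    congr 1
    ext u
    show (u:ℂ)^k * Complex.exp ((1 + ((0:ℝ):ℂ)*Complex.I)*u) = ((u^k * Real.exp (1*u) : ℝ) : ℂ)
    have h1 : ((1:ℂ) + ((0:ℝ):ℂ)*Complex.I) * u = ((u:ℝ):ℂ) := by push_cast; ring
    rw [h1, ← Complex.ofReal_exp]
    push_cast
    ring
  have base : ∀ k : ℕ,
      ∫ u, (u:ℂ)^k * Complex.exp ((1 + (0:ℝ)*Complex.I)*u) ∂p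
        = ∫ u, (u:ℂ)^k * Complex.exp ((1 + (0:ℝ)*Complex.I)*u) ∂q := by
    intro k
    rw [hcast p k, hcast q k]
    exact congrArg Complex.ofReal (hA k 1 one_pos)
  have main : ∀ n : ℕ, ∀ t : ℝ, |t| ≤ (n:ℝ)/8 → ∀ k : ℕ,
      ∫ u, (u:ℂ)^k * Complex.exp ((1 + t*Complex.I)*u) ∂p
        = ∫ u, (u:ℂ)^k * Complex.exp ((1 + t*Complex.I)*u) ∂q := by
    intro n
    induction n with
    | zero =>
      intro t ht k
      have ht0 : |t| ≤ 0 := by simpa using ht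
      have : t = 0 := abs_nonpos_iff.1 ht0
      subst this
      exact base k
    | succ n ih =>
      intro t ht k
      have hn1 : (0:ℝ) < (n:ℝ)+1 := by positivity
      set t0 : ℝ := t * n / ((n:ℝ)+1) with ht0def
      set d : ℝ := t / ((n:ℝ)+1) with hddef
      have hsplit : t = t0 + d := by
        rw [ht0def, hddef]
        field_simp
      have htpush : |t| ≤ ((n:ℝ)+1)/8 := by
        push_cast at ht
        linarith
      have habs_d : |d| < 4⁻¹ := by
        rw [hddef, abs_div, abs_of_pos hn1, div_lt_iff₀ hn1]
        calc |t| ≤ ((n:ℝ)+1)/8 := htpush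
          _ < 4⁻¹ * ((n:ℝ)+1) := by linarith
      have habs_t0 : |t0| ≤ (n:ℝ)/8 := by
        rw [ht0def, abs_div, abs_mul, abs_of_pos hn1, abs_of_nonneg (show (0:ℝ) ≤ (n:ℝ) from Nat.cast_nonneg n),
          div_le_iff₀ hn1]
        have hn0 : (0:ℝ) ≤ (n:ℝ) := Nat.cast_nonneg n
        nlinarith [abs_nonneg t]
      have h1 := series_expansion hp k t0 d habs_d
      have h2 := series_expansion hq k t0 d habs_d
      rw [hsplit]
      push_cast
      rw [h1, h2]
      exact tsum_congr (fun j => by rw [ih t0 habs_t0 (k+j)])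
  intro t k
  obtain ⟨n, hn⟩ := exists_nat_ge (8*|t|)
  refine main n t ?_ k
  rw [le_div_iff₀ (by norm_num : (0:ℝ) < 8)]
  linarith





lemma ae_nonneg_of_Iio_null {μ : Measure ℝ} (hμ0 : μ (Iio 0) = 0) : ∀ᵐ x ∂μ, 0 ≤ x := by
  rw [ae_iff]
  convert hμ0 using 2
  ext x
  simp [not_le]

lemma integrable_rpow_of_moments {μ : Measure ℝ} [IsFiniteMeasure μ] (hμ0 : μ (Iio 0) = 0)
    (hμi : ∀ n : ℕ, Integrable (fun x => x^n) μ) {σ : ℝ} (hσ : 0 ≤ σ) :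
    Integrable (fun x : ℝ => x ^ σ) μ := by
  have hbound : Integrable (fun x : ℝ => 1 + x ^ (⌈σ⌉₊ : ℕ)) μ :=
    (integrable_const 1).add (hμi _)
  refine hbound.mono' ?_ ?_
  · apply Continuous.aestronglyMeasurable
    apply continuous_iff_continuousAt.2
    intro x
    exact Real.continuousAt_rpow_const x σ (Or.inr hσ)
  · filter_upwards [ae_nonneg_of_Iio_null hμ0] with x hx
    rw [Real.norm_eq_abs, abs_of_nonneg (Real.rpow_nonneg hx σ)]
    rcases le_or_gt x 1 with hx1 | hx1
    · have h1 : x ^ σ ≤ 1 := Real.rpow_le_one hx hx1 hσ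
      have h2 : (0:ℝ) ≤ x ^ (⌈σ⌉₊ : ℕ) := pow_nonneg hx _
      linarith
    · have h1 : x ^ σ ≤ x ^ ((⌈σ⌉₊ : ℕ) : ℝ) :=
        Real.rpow_le_rpow_of_exponent_le hx1.le (Nat.le_ceil σ)
      rw [Real.rpow_natCast] at h1
      linarith

lemma setIntegral_rpow_Ioi {μ : Measure ℝ} [IsFiniteMeasure μ] (hμ0 : μ (Iio 0) = 0)
    (hμi : ∀ n : ℕ, Integrable (fun x => x^n) μ) {σ : ℝ} (hσ : 0 < σ) :
    ∫ x in Ioi 0, x ^ σ ∂μ = ∫ x, x ^ σ ∂μ := by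
  have hint := integrable_rpow_of_moments hμ0 hμi hσ.le
  have hsplit := integral_add_compl (measurableSet_Ioi (a := (0:ℝ))) hint
  have hzero : ∫ x in (Ioi (0:ℝ))ᶜ, x ^ σ ∂μ = 0 := by
    have hae : ∀ᵐ x ∂(μ.restrict (Ioi (0:ℝ))ᶜ), x ^ σ = 0 := by
      filter_upwards [ae_restrict_mem measurableSet_Ioi.compl,
        ae_restrict_of_ae (ae_nonneg_of_Iio_null hμ0)] with x hx1 hx2
      have : x = 0 := le_antisymm (by simpa using hx1) hx2
      rw [this]
      exact Real.zero_rpow (ne_of_gt hσ)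
    rw [integral_congr_ae hae, integral_zero]
  linarith

lemma map_log_exp_transfer {μ : Measure ℝ} (hμ0 : μ (Iio 0) = 0)
    (hμi : ∀ n : ℕ, Integrable (fun x => x^n) μ) [IsFiniteMeasure μ] :
    (∀ τ : ℝ, 0 < τ →
      Integrable (fun u => Real.exp (τ * u)) ((μ.restrict (Ioi 0)).map Real.log)) ∧
    (∀ τ : ℝ, 0 < τ →
      ∫ u, Real.exp (τ * u) ∂((μ.restrict (Ioi 0)).map Real.log) = ∫ x, x ^ τ ∂μ) := by
  have hae : ∀ τ : ℝ, ∀ᵐ x ∂(μ.restrict (Ioi 0)),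
      Real.exp (τ * Real.log x) = x ^ τ := by
    intro τ
    filter_upwards [ae_restrict_mem measurableSet_Ioi] with x hx
    rw [Real.rpow_def_of_pos hx, mul_comm]
  have hint : ∀ τ : ℝ, 0 < τ →
      Integrable (fun x => Real.exp (τ * Real.log x)) (μ.restrict (Ioi 0)) := by
    intro τ hτ
    exact ((integrable_rpow_of_moments hμ0 hμi hτ.le).restrict).congr
      (Filter.EventuallyEq.symm (hae τ))
  constructor
  · intro τ hτ
    rw [integrable_map_measure
      (show Continuous fun u : ℝ => Real.exp (τ*u) by fun_prop).aestronglyMeasurable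
      Real.measurable_log.aemeasurable]
    exact hint τ hτ
  · intro τ hτ
    rw [integral_map Real.measurable_log.aemeasurable
      (show Continuous fun u : ℝ => Real.exp (τ*u) by fun_prop).aestronglyMeasurable]
    rw [integral_congr_ae (hae τ)]
    exact setIntegral_rpow_Ioi hμ0 hμi hτ

theorem measure_eq_of_rpow_eq (μ ν : Measure ℝ) [IsFiniteMeasure μ] [IsFiniteMeasure ν]
    (hμ0 : μ (Iio 0) = 0) (hν0 : ν (Iio 0) = 0)
    (hμi : ∀ n : ℕ, Integrable (fun x => x^n) μ) (hνi : ∀ n : ℕ, Integrable (fun x => x^n) ν)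
    (hmass : μ univ = ν univ)
    (hmom : ∀ σ : ℝ, 0 < σ → ∫ x, x ^ σ ∂μ = ∫ x, x ^ σ ∂ν) : μ = ν := by
  set p : Measure ℝ := (μ.restrict (Ioi 0)).map Real.log with hpdef
  set q : Measure ℝ := (ν.restrict (Ioi 0)).map Real.log with hqdef
  haveI hfp : IsFiniteMeasure p := by
    constructor
    rw [hpdef, Measure.map_apply Real.measurable_log MeasurableSet.univ]
    exact lt_of_le_of_lt (measure_mono (subset_univ _))
      (lt_of_le_of_lt (Measure.restrict_le_self _) (measure_lt_top μ _))
  haveI hfq : IsFiniteMeasure q := by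
    constructor
    rw [hqdef, Measure.map_apply Real.measurable_log MeasurableSet.univ]
    exact lt_of_le_of_lt (measure_mono (subset_univ _))
      (lt_of_le_of_lt (Measure.restrict_le_self _) (measure_lt_top ν _))
  obtain ⟨hpint, hpval⟩ := map_log_exp_transfer hμ0 hμi
  obtain ⟨hqint, hqval⟩ := map_log_exp_transfer hν0 hνi
  have hV : ∀ σ : ℝ, 0 < σ → ∫ u, Real.exp (σ * u) ∂p = ∫ u, Real.exp (σ * u) ∂q := by
    intro σ hσ
    rw [hpval σ hσ, hqval σ hσ, hmom σ hσ]
  have hline := cexp_line_eq hpint hqint hV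
  -- tilted measures
  set dens : ℝ → ℝ≥0 := fun u => Real.toNNReal (Real.exp u) with hdens
  have hdensmeas : Measurable dens := measurable_real_toNNReal.comp Real.measurable_exp
  set P : Measure ℝ := p.withDensity (fun u => (dens u : ℝ≥0∞)) with hPdef
  set Q : Measure ℝ := q.withDensity (fun u => (dens u : ℝ≥0∞)) with hQdef
  have hfin : ∀ (w : Measure ℝ) [IsFiniteMeasure w],
      (∀ τ : ℝ, 0 < τ → Integrable (fun u => Real.exp (τ * u)) w) →
      IsFiniteMeasure (w.withDensity (fun u => (dens u : ℝ≥0∞))) := by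
    intro w _ hw
    constructor
    rw [withDensity_apply _ MeasurableSet.univ, Measure.restrict_univ]
    have h1 : Integrable (fun u => Real.exp (1 * u)) w := hw 1 one_pos
    have h2 := h1.hasFiniteIntegral
    rw [HasFiniteIntegral] at h2
    have heq : ∀ u : ℝ, ((dens u : ℝ≥0∞)) = (‖Real.exp (1*u)‖₊ : ℝ≥0∞) := by
      intro u
      show ENNReal.ofReal (Real.exp u) = (‖Real.exp (1*u)‖₊ : ℝ≥0∞)
      rw [one_mul, ← enorm_eq_nnnorm, ← ofReal_norm, Real.norm_eq_abs,
        abs_of_nonneg (Real.exp_pos _).le]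
    rw [show (fun u => (dens u : ℝ≥0∞)) = fun u => (‖Real.exp (1*u)‖₊ : ℝ≥0∞) from funext heq]
    exact h2
  haveI hfP : IsFiniteMeasure P := hfin p hpint
  haveI hfQ : IsFiniteMeasure Q := hfin q hqint
  have hchar : ∀ t : ℝ, ∫ y, Complex.exp (t*y*Complex.I) ∂P = ∫ y, Complex.exp (t*y*Complex.I) ∂Q := by
    intro t
    have hPint : ∫ y, Complex.exp (t*y*Complex.I) ∂P
        = ∫ u, (u:ℂ)^0 * Complex.exp ((1 + t*Complex.I)*u) ∂p := by
      rw [hPdef, integral_withDensity_eq_integral_smul hdensmeas]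
      congr 1
      ext u
      rw [hdens]
      simp only [pow_zero, one_mul]
      rw [NNReal.smul_def, Real.coe_toNNReal _ (Real.exp_pos _).le, Complex.real_smul,
        Complex.ofReal_exp, ← Complex.exp_add]
      congr 1
      push_cast
      ring
    have hQint : ∫ y, Complex.exp (t*y*Complex.I) ∂Q
        = ∫ u, (u:ℂ)^0 * Complex.exp ((1 + t*Complex.I)*u) ∂q := by
      rw [hQdef, integral_withDensity_eq_integral_smul hdensmeas]
      congr 1
      ext u
      rw [hdens]
      simp only [pow_zero, one_mul]
      rw [NNReal.smul_def, Real.coe_toNNReal _ (Real.exp_pos _).le, Complex.real_smul,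
        Complex.ofReal_exp, ← Complex.exp_add]
      congr 1
      push_cast
      ring
    rw [hPint, hQint]
    exact hline t 0
  have hPQ : P = Q := ext_of_integral_expI_eq hchar
  -- recover p = q
  have hinv : ∀ (w : Measure ℝ),
      (w.withDensity (fun u => (dens u : ℝ≥0∞))).withDensity
        (fun u => ENNReal.ofReal (Real.exp (-u))) = w := by
    intro w
    rw [← withDensity_mul _ (by exact_mod_cast hdensmeas.coe_nnreal_ennreal)
      (show Measurable fun u : ℝ => ENNReal.ofReal (Real.exp (-u)) from
        ENNReal.measurable_ofReal.comp (Real.measurable_exp.comp measurable_neg))]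
    have : ((fun u => (dens u : ℝ≥0∞)) * fun u => ENNReal.ofReal (Real.exp (-u))) = 1 := by
      ext u
      rw [Pi.mul_apply, hdens]
      show ENNReal.ofReal (Real.exp u) * ENNReal.ofReal (Real.exp (-u)) = 1
      rw [← ENNReal.ofReal_mul (Real.exp_pos _).le, ← Real.exp_add]
      simp
    rw [this, withDensity_one]
  have hpq : p = q := by
    have h1 := hinv p
    have h2 := hinv q
    rw [← h1, ← h2, ← hPdef, ← hQdef, hPQ]
  -- recover restricts
  have hrestr : ∀ (w : Measure ℝ), w (Iio 0) = 0 → True := fun _ _ => trivial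
  have hback : ∀ (w : Measure ℝ),
      ((w.restrict (Ioi 0)).map Real.log).map Real.exp = w.restrict (Ioi 0) := by
    intro w
    rw [Measure.map_map Real.measurable_exp Real.measurable_log]
    have hae : (Real.exp ∘ Real.log) =ᵐ[w.restrict (Ioi 0)] id := by
      filter_upwards [ae_restrict_mem measurableSet_Ioi] with x hx
      exact Real.exp_log hx
    rw [Measure.map_congr hae, Measure.map_id]
  have hres : μ.restrict (Ioi 0) = ν.restrict (Ioi 0) := by
    rw [← hback μ, ← hback ν, ← hpdef, ← hqdef, hpq]
  -- conclude
  refine Measure.ext_of_Iic μ ν (fun a => ?_)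
  rcases lt_or_ge a 0 with ha | ha
  · have h1 : μ (Iic a) = 0 :=
      measure_mono_null (fun x hx => lt_of_le_of_lt hx ha) hμ0
    have h2 : ν (Iic a) = 0 :=
      measure_mono_null (fun x hx => lt_of_le_of_lt hx ha) hν0
    rw [h1, h2]
  · have hIoi : ∀ (w : Measure ℝ), w.restrict (Ioi 0) (Ioi a) = w (Ioi a) := by
      intro w
      rw [Measure.restrict_apply measurableSet_Ioi]
      congr 1
      rw [Ioi_inter_Ioi, max_eq_left ha]
    have hμa : μ (Iic a) = μ univ - μ (Ioi a) := by
      rw [← compl_Ioi, measure_compl measurableSet_Ioi (measure_ne_top μ _)]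
    have hνa : ν (Iic a) = ν univ - ν (Ioi a) := by
      rw [← compl_Ioi, measure_compl measurableSet_Ioi (measure_ne_top ν _)]
    rw [hμa, hνa, hmass, ← hIoi μ, ← hIoi ν, hres]





lemma rpow_cont {σ : ℝ} (hσ : 0 ≤ σ) : Continuous (fun x : ℝ => x ^ σ) := by
  apply continuous_iff_continuousAt.2
  intro x
  exact Real.continuousAt_rpow_const x σ (Or.inr hσ)

lemma repr_finite {M : Measure ℝ} {s : ℕ → ℝ} (hM : IsStieltjesRepr M s) :
    IsFiniteMeasure M := by
  have h := (hM.2 0).1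
  simp only [pow_zero] at h
  rcases (integrable_const_iff (c := (1:ℝ))).1 h with h1 | h2
  · exact absurd h1 one_ne_zero
  · exact h2

lemma repr_mass {M N : Measure ℝ} {s : ℕ → ℝ} (hM : IsStieltjesRepr M s)
    (hN : IsStieltjesRepr N s) [IsFiniteMeasure M] [IsFiniteMeasure N] :
    M univ = N univ := by
  have h1 := (hM.2 0).2
  have h2 := (hN.2 0).2
  simp only [pow_zero, integral_const, smul_eq_mul, mul_one] at h1 h2
  rw [h1] at h2
  exact (ENNReal.toReal_eq_toReal_iff' (measure_ne_top M _) (measure_ne_top N _)).1 h2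

lemma ae_nonneg_prod {M ρ : Measure ℝ} [IsFiniteMeasure M] [IsFiniteMeasure ρ]
    (hM0 : M (Iio 0) = 0) (hρ0 : ρ (Iio 0) = 0) :
    ∀ᵐ z ∂(M.prod ρ), 0 ≤ z.1 ∧ 0 ≤ z.2 := by
  rw [ae_iff]
  have hnull : (M.prod ρ) ((Iio 0 ×ˢ univ) ∪ (univ ×ˢ Iio 0)) = 0 :=
    measure_union_null (by rw [Measure.prod_prod, hM0, zero_mul])
      (by rw [Measure.prod_prod, hρ0, mul_zero])
  refine measure_mono_null ?_ hnull
  intro z hz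
  simp only [mem_setOf_eq, not_and, not_le] at hz
  rcases lt_or_ge z.1 0 with h1 | h1
  · exact Or.inl (by simp [h1])
  · exact Or.inr (by simp [hz h1])

lemma repr_conv {M ρ : Measure ℝ} {s t u : ℕ → ℝ} (h : ∀ n, u n = s n * t n)
    (hM : IsStieltjesRepr M s) (hρ : IsStieltjesRepr ρ t)
    [IsFiniteMeasure M] [IsFiniteMeasure ρ] :
    IsStieltjesRepr ((M.prod ρ).map (fun z : ℝ × ℝ => z.1 * z.2)) u := by
  have hm : Measurable (fun z : ℝ × ℝ => z.1 * z.2) := measurable_fst.mul measurable_snd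
  refine ⟨?_, fun n => ⟨?_, ?_⟩⟩
  · rw [Measure.map_apply hm measurableSet_Iio]
    have hnull : (M.prod ρ) ((Iio 0 ×ˢ univ) ∪ (univ ×ˢ Iio 0)) = 0 :=
      measure_union_null (by rw [Measure.prod_prod, hM.1, zero_mul])
        (by rw [Measure.prod_prod, hρ.1, mul_zero])
    refine measure_mono_null ?_ hnull
    intro z hz
    simp only [mem_preimage, mem_Iio] at hz
    rcases lt_or_ge z.1 0 with h1 | h1
    · exact Or.inl (by simp [h1])
    · rcases lt_or_ge z.2 0 with h2 | h2
      · exact Or.inr (by simp [h2])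
      · exact absurd hz (not_lt.2 (mul_nonneg h1 h2))
  · rw [integrable_map_measure (continuous_pow n).aestronglyMeasurable hm.aemeasurable]
    have h1 : Integrable (fun z : ℝ×ℝ => z.1^n * z.2^n) (M.prod ρ) :=
      (hM.2 n).1.mul_prod (hρ.2 n).1
    refine h1.congr ?_
    filter_upwards with z
    simp [Function.comp, mul_pow]
  · rw [integral_map hm.aemeasurable (continuous_pow n).aestronglyMeasurable]
    have h1 : ∫ z, ((fun z : ℝ×ℝ => z.1 * z.2) z) ^ n ∂(M.prod ρ)
        = ∫ z : ℝ×ℝ, z.1^n * z.2^n ∂(M.prod ρ) := by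
      congr 1
      ext z
      exact mul_pow _ _ _
    rw [h n, (hM.2 n).2, (hρ.2 n).2, h1]
    exact (integral_prod_mul (μ := M) (ν := ρ) (fun x : ℝ => x ^ n) (fun x : ℝ => x ^ n)).symm

lemma rho_rpow_pos {ρ : Measure ℝ} {t : ℕ → ℝ} (hρ : IsStieltjesRepr ρ t)
    (htpos : ∀ n, 0 < t n) [IsFiniteMeasure ρ] {σ : ℝ} (hσ : 0 < σ) :
    0 < ∫ x, x ^ σ ∂ρ := by
  have hae_nonneg : ∀ᵐ x ∂ρ, 0 ≤ x := by
    rw [ae_iff]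
    convert hρ.1 using 2
    ext x
    simp [not_le]
  have hIoi : ρ (Ioi 0) ≠ 0 := by
    intro h0
    have hae0 : ∀ᵐ x ∂ρ, x ^ 1 = (0:ℝ) := by
      rw [ae_iff]
      refine measure_mono_null ?_ (measure_union_null hρ.1 h0)
      intro x hx
      simp only [mem_setOf_eq, pow_one] at hx
      rcases lt_trichotomy x 0 with hl | hl | hl
      · exact Or.inl hl
      · exact absurd hl hx
      · exact Or.inr hl
    have ht1 : t 1 = 0 := by
      rw [(hρ.2 1).2, integral_congr_ae hae0, integral_zero]
    exact absurd ht1 (ne_of_gt (htpos 1))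
  rw [integral_pos_iff_support_of_nonneg_ae]
  · apply lt_of_lt_of_le (pos_iff_ne_zero.mpr hIoi)
    apply measure_mono
    intro x hx
    simp only [Function.mem_support]
    exact ne_of_gt (Real.rpow_pos_of_pos hx σ)
  · filter_upwards [hae_nonneg] with x hx
    exact Real.rpow_nonneg hx σ
  · exact integrable_rpow_of_moments hρ.1 (fun n => (hρ.2 n).1) hσ.le


end SP

theorem product_with_indeterminate_is_indeterminate
    (s t u : ℕ → ℝ) (h : ∀ n, u n = s n * t n)
    (hs : IsStieltjesMomentSeq s) (ht : IsStieltjesMomentSeq t)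
    (hu : IsStieltjesMomentSeq u)
    (htpos : ∀ n, 0 < t n) (hsind : SIndeterminate s) :
    SIndeterminate u := by
  obtain ⟨μ, ν, hμ, hν, hμν⟩ := hsind
  obtain ⟨ρ, hρ⟩ := ht
  haveI : IsFiniteMeasure μ := SP.repr_finite hμ
  haveI : IsFiniteMeasure ν := SP.repr_finite hν
  haveI : IsFiniteMeasure ρ := SP.repr_finite hρ
  have hm : Measurable (fun z : ℝ × ℝ => z.1 * z.2) := measurable_fst.mul measurable_snd
  refine ⟨(μ.prod ρ).map (fun z : ℝ × ℝ => z.1 * z.2),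
    (ν.prod ρ).map (fun z : ℝ × ℝ => z.1 * z.2),
    SP.repr_conv h hμ hρ, SP.repr_conv h hν hρ, ?_⟩
  intro hEq
  apply hμν
  have hconv : ∀ (M : Measure ℝ) [IsFiniteMeasure M], M (Set.Iio 0) = 0 →
      ∀ {σ : ℝ}, 0 < σ →
      ∫ x, x ^ σ ∂((M.prod ρ).map (fun z : ℝ × ℝ => z.1 * z.2))
        = (∫ x, x ^ σ ∂M) * (∫ x, x ^ σ ∂ρ) := by
    intro M _ hM0 σ hσ
    rw [integral_map hm.aemeasurable (SP.rpow_cont hσ.le).aestronglyMeasurable]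
    have hae : ∀ᵐ z ∂(M.prod ρ), ((fun z : ℝ × ℝ => z.1 * z.2) z) ^ σ = z.1 ^ σ * z.2 ^ σ := by
      filter_upwards [SP.ae_nonneg_prod hM0 hρ.1] with z hz
      exact Real.mul_rpow hz.1 hz.2
    rw [integral_congr_ae hae]
    exact integral_prod_mul (fun x => x ^ σ) (fun x => x ^ σ)
  have hmom : ∀ σ : ℝ, 0 < σ → ∫ x, x ^ σ ∂μ = ∫ x, x ^ σ ∂ν := by
    intro σ hσ
    have h1 := hconv μ hμ.1 hσ
    have h2 := hconv ν hν.1 hσ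
    rw [hEq, h2] at h1
    exact mul_right_cancel₀ (ne_of_gt (SP.rho_rpow_pos hρ htpos hσ)) h1.symm
  exact SP.measure_eq_of_rpow_eq μ ν hμ.1 hν.1 (fun n => (hμ.2 n).1) (fun n => (hν.2 n).1)
    (SP.repr_mass hμ hν) hmom
end

section
/- Let f be a Bernstein function, not identically zero, and suppose f'(s)/f(s) = ∫₀^∞ e^{−sx} dκ(x) for a nonnegative measure κ on [0,∞). Then κ({0}) = 0. -/
open MeasureTheory Real Filter Topology

lemma aux_bound_deriv {t x : ℝ} (ht : 0 < t) (hx : 0 < x) :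
    x * Real.exp (-t * x) ≤ (1 + 1 / t) * (x / (1 + x)) := by
  have hx1 : (0:ℝ) < 1 + x := by nlinarith
  have h1 : Real.exp (-(t*x)) ≤ 1 / (1 + t*x) := by
    rw [le_div_iff₀ (by nlinarith : (0:ℝ) < 1 + t*x)]
    calc Real.exp (-(t*x)) * (1 + t*x) ≤ Real.exp (-(t*x)) * Real.exp (t*x) := by
          refine mul_le_mul_of_nonneg_left ?_ (Real.exp_nonneg _)
          exact (Real.add_one_le_exp (t*x)).trans_eq' (by ring)
      _ = 1 := by rw [← Real.exp_add]; simp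
  have h2 : x * Real.exp (-t*x) ≤ x / (1 + t*x) := by
    rw [neg_mul]
    calc x * Real.exp (-(t*x)) ≤ x * (1/(1+t*x)) :=
          mul_le_mul_of_nonneg_left h1 hx.le
      _ = x / (1+t*x) := by ring
  refine h2.trans ?_
  have h3 : 0 < 1/t := by positivity
  have h4 : t * (1/t) = 1 := by field_simp
  rw [show (1+1/t)*(x/(1+x)) = ((1+1/t)*x)/(1+x) by ring,
    div_le_div_iff₀ (by nlinarith) hx1]
  nlinarith [h4, mul_nonneg (mul_nonneg ht.le hx.le) hx.le, mul_nonneg h3.le hx.le]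

lemma aux_bound_fn {t x : ℝ} (ht : 0 < t) (hx : 0 < x) :
    1 - Real.exp (-t * x) ≤ (1 + t) * (x / (1 + x)) := by
  have hx1 : (0:ℝ) < 1 + x := by nlinarith
  rw [show (1+t)*(x/(1+x)) = ((1+t)*x)/(1+x) by ring, le_div_iff₀ hx1]
  rcases le_total (t * x) 1 with h | h
  · have h1 : 1 - t*x ≤ Real.exp (-(t*x)) := by
      have := Real.add_one_le_exp (-(t*x)); linarith
    rw [neg_mul]; nlinarith [Real.exp_nonneg (-(t*x))]
  · have h1 : 0 ≤ Real.exp (-t*x) := Real.exp_nonneg _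
    nlinarith

lemma aux_fn_nonneg {t x : ℝ} (ht : 0 ≤ t) (hx : 0 ≤ x) :
    0 ≤ 1 - Real.exp (-t * x) := by
  have : Real.exp (-t*x) ≤ 1 := by
    rw [Real.exp_le_one_iff]; nlinarith
  linarith

theorem bernstein_logderiv_repr_measure_no_atom_at_zero
    (f : ℝ → ℝ) (a b : ℝ) (ν κ : Measure ℝ)
    (ha : 0 ≤ a) (hb : 0 ≤ b)
    (hsupp : ν (Set.Iic 0) = 0)
    (hlevy : Integrable (fun x => x / (1 + x)) ν)
    (hrep : ∀ s : ℝ, 0 < s →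
      f s = a + b * s + ∫ x, (1 - Real.exp (-s * x)) ∂ν)
    (hnonzero : ∃ s : ℝ, 0 < s ∧ f s ≠ 0)
    (hκsupp : κ (Set.Iio 0) = 0)
    (hκint : ∀ s : ℝ, 0 < s → Integrable (fun x => Real.exp (-s * x)) κ)
    (hκ : ∀ s : ℝ, 0 < s → deriv f s / f s = ∫ x, Real.exp (-s * x) ∂κ) :
    κ {0} = 0 := by
  obtain ⟨s₀, hs₀, hfne⟩ := hnonzero
  have hν_ae : ∀ᵐ x ∂ν, 0 < x := by
    rw [ae_iff]
    convert hsupp using 2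
    ext x; simp [not_lt]
  -- integrability of the two families
  have hint1 : ∀ s : ℝ, 0 < s → Integrable (fun x => 1 - Real.exp (-s * x)) ν := by
    intro s hs
    refine (hlevy.const_mul (1 + s)).mono
      ((Continuous.aestronglyMeasurable (by fun_prop))) ?_
    filter_upwards [hν_ae] with x hx
    have h0 := aux_fn_nonneg hs.le hx.le
    have h1 := aux_bound_fn hs hx
    have h2 : 0 ≤ x / (1 + x) := by positivity
    rw [Real.norm_eq_abs, Real.norm_eq_abs, abs_of_nonneg h0,
      abs_of_nonneg (by nlinarith)]
    exact h1
  have hint2 : ∀ s : ℝ, 0 < s → Integrable (fun x => x * Real.exp (-s * x)) ν := by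
    intro s hs
    refine (hlevy.const_mul (1 + 1/s)).mono
      ((Continuous.aestronglyMeasurable (by fun_prop))) ?_
    filter_upwards [hν_ae] with x hx
    have h0 : 0 ≤ x * Real.exp (-s*x) := by positivity
    have h1 := aux_bound_deriv hs hx
    have h2 : 0 ≤ x / (1 + x) := by positivity
    have h3 : 0 ≤ 1 + 1/s := by positivity
    rw [Real.norm_eq_abs, Real.norm_eq_abs, abs_of_nonneg h0,
      abs_of_nonneg (by nlinarith)]
    exact h1
  -- derivative of f
  have hderiv : ∀ s : ℝ, 0 < s →
      HasDerivAt f (b + ∫ x, x * Real.exp (-s * x) ∂ν) s := by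
    intro s hs
    have hs2 : 0 < s/2 := by linarith
    have hballpos : ∀ t ∈ Metric.ball s (s/2), s/2 < t := by
      intro t htm
      rw [Metric.mem_ball, Real.dist_eq, abs_lt] at htm
      linarith [htm.1]
    have key := hasDerivAt_integral_of_dominated_loc_of_deriv_le (μ := ν)
      (F := fun t x => 1 - Real.exp (-t * x)) (F' := fun t x => x * Real.exp (-t * x))
      (x₀ := s) (bound := fun x => (1 + 2/s) * (x / (1 + x))) (Metric.ball_mem_nhds s hs2)
      (Eventually.of_forall fun t => Continuous.aestronglyMeasurable (by fun_prop))
      (hint1 s hs)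
      (Continuous.aestronglyMeasurable (by fun_prop))
      ?_ (hlevy.const_mul (1 + 2/s)) ?_
    · have hG := key.2
      have hlin : HasDerivAt (fun u : ℝ => a + b * u) b s := by
        simpa using ((hasDerivAt_id s).const_mul b).const_add a
      have hsum := hlin.add hG
      refine hsum.congr_of_eventuallyEq ?_
      filter_upwards [eventually_gt_nhds hs] with u hu
      exact hrep u hu
    · filter_upwards [hν_ae] with x hx
      intro t htm
      have hts : s/2 < t := hballpos t htm
      have h0 : 0 ≤ x * Real.exp (-t*x) := by positivity
      rw [Real.norm_eq_abs, abs_of_nonneg h0]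
      have h1 : x * Real.exp (-t*x) ≤ x * Real.exp (-(s/2)*x) := by
        refine mul_le_mul_of_nonneg_left (Real.exp_le_exp.mpr ?_) hx.le
        nlinarith
      refine h1.trans ?_
      have := aux_bound_deriv hs2 hx
      rwa [show 1/(s/2) = 2/s by rw [one_div_div]] at this
    · filter_upwards with x
      intro t _
      have h := ((((hasDerivAt_id t).mul_const x).neg).exp).const_sub 1
      simpa [neg_mul, mul_comm] using h
  -- positivity / monotonicity of f
  have hmono : ∀ s t : ℝ, 0 < s → s ≤ t → f s ≤ f t := by
    intro s t hs hst
    have ht : 0 < t := lt_of_lt_of_le hs hst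
    rw [hrep s hs, hrep t ht]
    have hmi : (∫ x, (1 - Real.exp (-s * x)) ∂ν) ≤ ∫ x, (1 - Real.exp (-t * x)) ∂ν := by
      refine integral_mono_ae (hint1 s hs) (hint1 t ht) ?_
      filter_upwards [hν_ae] with x hx
      have : Real.exp (-t*x) ≤ Real.exp (-s*x) := by
        refine Real.exp_le_exp.mpr ?_; nlinarith
      linarith
    have := mul_le_mul_of_nonneg_left hst hb
    linarith
  have hfpos : 0 < f s₀ := by
    refine lt_of_le_of_ne ?_ (Ne.symm hfne)
    rw [hrep s₀ hs₀]
    have hi : 0 ≤ ∫ x, (1 - Real.exp (-s₀ * x)) ∂ν := by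
      refine integral_nonneg_of_ae ?_
      filter_upwards [hν_ae] with x hx
      exact aux_fn_nonneg hs₀.le hx.le
    nlinarith [mul_nonneg hb hs₀.le]
  have hfge : ∀ s : ℝ, 0 < s → b * s ≤ f s := by
    intro s hs
    rw [hrep s hs]
    have hi : 0 ≤ ∫ x, (1 - Real.exp (-s * x)) ∂ν := by
      refine integral_nonneg_of_ae ?_
      filter_upwards [hν_ae] with x hx
      exact aux_fn_nonneg hs.le hx.le
    linarith
  -- κ₀ lower bound for the log-derivative
  have hκ0le : ∀ s : ℝ, 0 < s → (κ {0}).toReal ≤ ∫ x, Real.exp (-s * x) ∂κ := by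
    intro s hs
    have e1 : ∫ x in ({0} : Set ℝ), Real.exp (-s*x) ∂κ = (κ {0}).toReal := by
      have e0 : ∫ x in ({0} : Set ℝ), Real.exp (-s*x) ∂κ
          = ∫ _x in ({0} : Set ℝ), (1:ℝ) ∂κ :=
        setIntegral_congr_fun (measurableSet_singleton 0)
          (fun x hx => by simp only [Set.mem_singleton_iff] at hx; simp [hx])
      rw [e0]; simp
    rw [← e1]
    exact setIntegral_le_integral (hκint s hs)
      (Eventually.of_forall fun x => (Real.exp_pos _).le)
  -- the integral I s tends to 0
  have hI : Tendsto (fun s => ∫ x, x * Real.exp (-s * x) ∂ν) atTop (𝓝 0) := by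
    have := tendsto_integral_filter_of_dominated_convergence (μ := ν) (l := (atTop : Filter ℝ))
      (F := fun (s : ℝ) x => x * Real.exp (-s * x)) (f := fun _ => (0:ℝ))
      (bound := fun x => 2 * (x / (1 + x)))
      (Eventually.of_forall fun t => Continuous.aestronglyMeasurable (by fun_prop))
      ?_ (hlevy.const_mul 2) ?_
    · simpa using this
    · filter_upwards [eventually_ge_atTop (1:ℝ)] with s hs1
      filter_upwards [hν_ae] with x hx
      have h0 : 0 ≤ x * Real.exp (-s*x) := by positivity
      rw [Real.norm_eq_abs, abs_of_nonneg h0]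
      have h1 := aux_bound_deriv (by linarith : (0:ℝ) < s) hx
      have h2 : (1 + 1/s : ℝ) ≤ 2 := by
        have : (1:ℝ)/s ≤ 1 := by
          rw [div_le_one (by linarith)]; exact hs1
        linarith
      have h3 : 0 ≤ x / (1 + x) := by positivity
      nlinarith
    · filter_upwards [hν_ae] with x hx
      have h0 : Tendsto (fun s : ℝ => s * x) atTop atTop :=
        tendsto_id.atTop_mul_const hx
      have h1 : Tendsto (fun s : ℝ => -s * x) atTop atBot := by
        simp only [neg_mul]
        exact tendsto_neg_atBot_iff.mpr h0
      have h2 := Real.tendsto_exp_atBot.comp h1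
      have h3 := h2.const_mul x
      simpa using h3
  -- main estimate
  have hest : ∀ s : ℝ, max s₀ 1 ≤ s →
      (κ {0}).toReal ≤ 1/s + (∫ x, x * Real.exp (-s * x) ∂ν) / f s₀ := by
    intro s hss
    have hs1 : (1:ℝ) ≤ s := le_trans (le_max_right _ _) hss
    have hs : 0 < s := by linarith
    have hfs : f s₀ ≤ f s := hmono s₀ s hs₀ (le_trans (le_max_left _ _) hss)
    have hfspos : 0 < f s := lt_of_lt_of_le hfpos hfs
    have hIs : 0 ≤ ∫ x, x * Real.exp (-s * x) ∂ν := by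
      refine integral_nonneg_of_ae ?_
      filter_upwards [hν_ae] with x hx
      positivity
    have e1 : deriv f s = b + ∫ x, x * Real.exp (-s * x) ∂ν := (hderiv s hs).deriv
    have e2 : (κ {0}).toReal ≤ deriv f s / f s := by
      rw [hκ s hs]; exact hκ0le s hs
    refine e2.trans ?_
    rw [e1, add_div]
    have hb1 : b / f s ≤ 1 / s := by
      rw [div_le_div_iff₀ hfspos hs]
      have := hfge s hs
      linarith
    have hb2 : (∫ x, x * Real.exp (-s * x) ∂ν) / f s ≤
        (∫ x, x * Real.exp (-s * x) ∂ν) / f s₀ := by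
      gcongr
    linarith
  -- conclude κ₀ ≤ 0
  have hconv : Tendsto (fun s : ℝ => 1/s + (∫ x, x * Real.exp (-s * x) ∂ν) / f s₀)
      atTop (𝓝 0) := by
    have h1 : Tendsto (fun s : ℝ => 1/s) atTop (𝓝 0) := by
      simpa [one_div] using tendsto_inv_atTop_zero
    have h2 := hI.div_const (f s₀)
    simpa using h1.add h2
  have hle0 : (κ {0}).toReal ≤ 0 :=
    ge_of_tendsto hconv ((eventually_ge_atTop (max s₀ 1)).mono hest)
  have heq0 : (κ {0}).toReal = 0 := le_antisymm hle0 ENNReal.toReal_nonneg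
  have hfin : κ {0} ≠ ⊤ := by
    have hsub : ({0} : Set ℝ) ⊆ {x : ℝ | 1 ≤ Real.exp (-1 * x)} := by
      intro x hx
      simp only [Set.mem_singleton_iff] at hx
      simp [hx]
    exact (lt_of_le_of_lt (measure_mono hsub)
      ((hκint 1 one_pos).measure_ge_lt_top one_pos)).ne
  rcases (ENNReal.toReal_eq_zero_iff _).mp heq0 with h | h
  · exact h
  · exact absurd h hfin
end

section
/- Fix β > 0, α ≥ 0, and a Bernstein function f with f(α) > 0. Define s₀ = 1 and sₙ = f(α)f(α+β)···f(α+(n−1)β). Then for any 0 < c ≤ 2, the Carleman condition Σₙ sₙ^{−c/(2n)} = ∞ holds. -/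
open MeasureTheory Real Finset

lemma prod_cast_fact : ∀ n : ℕ, (∏ k ∈ Finset.range n, ((k:ℝ)+1)) = (n.factorial : ℝ) := by
  intro n
  induction n with
  | zero => simp
  | succ m ih => rw [Finset.prod_range_succ, ih, Nat.factorial_succ]; push_cast; ring

lemma pt_bound {s x : ℝ} (hs : 0 ≤ s) (hx : 0 < x) :
    1 - Real.exp (-s * x) ≤ 2 * (1 + s) * (x / (1 + x)) := by
  have h1 : 0 < 1 + x := by linarith
  have hexp : (-s * x) + 1 ≤ Real.exp (-s * x) := Real.add_one_le_exp _
  have hexp0 : 0 < Real.exp (-s * x) := Real.exp_pos _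
  rw [← mul_div_assoc, le_div_iff₀ h1]
  rcases le_total x 1 with hx1 | hx1
  · nlinarith [mul_nonneg hs hx.le]
  · nlinarith

lemma ae_pos {ν : Measure ℝ} (hsupp : ν (Set.Iic 0) = 0) : ∀ᵐ x ∂ν, 0 < x := by
  rw [ae_iff]
  convert hsupp using 2
  ext x; simp [not_lt]

lemma integ_bound (ν : Measure ℝ) (hsupp : ν (Set.Iic 0) = 0)
    (hlevy : Integrable (fun x => x / (1 + x)) ν) {s : ℝ} (hs : 0 ≤ s) :
    Integrable (fun x => 1 - Real.exp (-s * x)) ν := by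
  refine ((hlevy.const_mul (2 * (1 + s))).mono' ?_ ?_)
  · exact (Continuous.aestronglyMeasurable (by continuity))
  · filter_upwards [ae_pos hsupp] with x hx
    have h1 : 0 < 1 + x := by linarith
    have h2 := pt_bound hs hx
    have h3 : Real.exp (-s * x) ≤ 1 := by
      rw [Real.exp_le_one_iff]; nlinarith
    rw [Real.norm_eq_abs, abs_of_nonneg (by linarith)]
    simpa [mul_div_assoc] using h2

theorem carleman_condition_for_bernstein_products
    (f : ℝ → ℝ) (a b α β : ℝ) (ν : Measure ℝ)
    (ha : 0 ≤ a) (hb : 0 ≤ b) (hα : 0 ≤ α) (hβ : 0 < β)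
    (hsupp : ν (Set.Iic 0) = 0)
    (hlevy : Integrable (fun x => x / (1 + x)) ν)
    (hrep : ∀ s : ℝ, 0 ≤ s →
      f s = a + b * s + ∫ x, (1 - Real.exp (-s * x)) ∂ν)
    (hfα : 0 < f α)
    (s : ℕ → ℝ)
    (hs : ∀ n : ℕ, s n = ∏ k ∈ Finset.range n, f (α + k * β))
    (c : ℝ) (hc0 : 0 < c) (hc2 : c ≤ 2) :
    ¬ Summable (fun n : ℕ => (s n) ^ (-(c / (2 * (n : ℝ))))) := by
  set I : ℝ := ∫ x, x / (1 + x) ∂ν with hI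
  have hI0 : 0 ≤ I := by
    refine integral_nonneg_of_ae ?_
    filter_upwards [ae_pos hsupp] with x hx
    positivity
  -- monotonicity of f on [0, ∞)
  have hmono : ∀ u v : ℝ, 0 ≤ u → u ≤ v → f u ≤ f v := by
    intro u v hu huv
    rw [hrep u hu, hrep v (hu.trans huv)]
    have hint : (∫ x, (1 - Real.exp (-u * x)) ∂ν) ≤ ∫ x, (1 - Real.exp (-v * x)) ∂ν := by
      refine integral_mono_ae (integ_bound ν hsupp hlevy hu)
        (integ_bound ν hsupp hlevy (hu.trans huv)) ?_
      filter_upwards [ae_pos hsupp] with x hx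
      have : Real.exp (-v * x) ≤ Real.exp (-u * x) := by
        apply Real.exp_le_exp.2; nlinarith
      simp only [sub_le_sub_iff_left]; linarith [this]
    nlinarith [mul_le_mul_of_nonneg_left huv hb]
  -- upper bound for f
  have hub : ∀ u : ℝ, 0 ≤ u → f u ≤ (a + 2 * I) + (b + 2 * I) * u := by
    intro u hu
    rw [hrep u hu]
    have hint : (∫ x, (1 - Real.exp (-u * x)) ∂ν) ≤ 2 * (1 + u) * I := by
      have : (∫ x, (1 - Real.exp (-u * x)) ∂ν) ≤ ∫ x, 2 * (1 + u) * (x / (1 + x)) ∂ν := by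
        refine integral_mono_ae (integ_bound ν hsupp hlevy hu)
          (hlevy.const_mul _) ?_
        filter_upwards [ae_pos hsupp] with x hx
        exact pt_bound hu hx
      rwa [integral_const_mul] at this
    nlinarith
  -- the linear growth constant
  set M : ℝ := max 1 ((a + 2 * I) + (b + 2 * I) * (α + β)) with hM
  have hM1 : (1 : ℝ) ≤ M := le_max_left _ _
  have hM0 : 0 < M := lt_of_lt_of_le one_pos hM1
  have hfk : ∀ k : ℕ, f (α + k * β) ≤ M * (k + 1) := by
    intro k
    have hk0 : (0:ℝ) ≤ (k:ℝ) := Nat.cast_nonneg k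
    have h1 : α + k * β ≤ (α + β) * (k + 1) := by nlinarith
    have h2 : f (α + k * β) ≤ (a + 2*I) + (b + 2*I) * ((α + β) * (k+1)) := by
      refine (hub _ (by positivity)).trans ?_
      have : 0 ≤ b + 2*I := by linarith
      nlinarith
    have h3 : (a + 2*I) + (b + 2*I) * ((α + β) * (k+1))
        ≤ ((a + 2*I) + (b + 2*I) * (α + β)) * (k+1) := by nlinarith
    calc f (α + k * β) ≤ ((a + 2*I) + (b + 2*I) * (α + β)) * (k+1) := h2.trans h3
      _ ≤ M * (k+1) := by
          apply mul_le_mul_of_nonneg_right (le_max_right _ _) (by positivity)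
  have hfpos : ∀ k : ℕ, 0 < f (α + k * β) := by
    intro k
    have hk0 : (0:ℝ) ≤ (k:ℝ) := Nat.cast_nonneg k
    exact lt_of_lt_of_le hfα (hmono α _ hα (by nlinarith))
  have hspos : ∀ n : ℕ, 0 < s n := by
    intro n; rw [hs n]
    exact Finset.prod_pos (fun k _ => hfpos k)
  -- product bound : s n ≤ (M*n)^n for n ≥ 1
  have hsub : ∀ n : ℕ, 1 ≤ n → s n ≤ (M * n) ^ n := by
    intro n hn
    have h1 : s n ≤ M ^ n * (n.factorial : ℝ) := by
      rw [hs n]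
      have : (∏ k ∈ Finset.range n, f (α + k * β)) ≤ ∏ k ∈ Finset.range n, (M * (k+1)) :=
        Finset.prod_le_prod (fun k _ => (hfpos k).le) (fun k _ => hfk k)
      refine this.trans_eq ?_
      rw [Finset.prod_mul_distrib, Finset.prod_const, Finset.card_range]
      rw [prod_cast_fact]
    have h2 : (n.factorial : ℝ) ≤ (n : ℝ) ^ n := by
      have := Nat.factorial_le_pow n
      exact_mod_cast this
    calc s n ≤ M ^ n * (n.factorial : ℝ) := h1
      _ ≤ M ^ n * (n:ℝ) ^ n := by
          apply mul_le_mul_of_nonneg_left h2 (by positivity)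
      _ = (M * n) ^ n := by rw [mul_pow]
  -- lower bound on terms
  have hterm : ∀ n : ℕ, 1 ≤ n → 1 / (M * n) ≤ (s n) ^ (-(c / (2 * (n : ℝ)))) := by
    intro n hn
    have hn0 : (0:ℝ) < (n:ℝ) := by exact_mod_cast hn
    have hMn1 : (1:ℝ) ≤ M * n := by
      calc (1:ℝ) = 1 * 1 := by ring
        _ ≤ M * n := by
            apply mul_le_mul hM1 (by exact_mod_cast hn) one_pos.le hM0.le
    have hMn0 : (0:ℝ) < M * n := lt_of_lt_of_le one_pos hMn1
    have he : -(c / (2 * (n:ℝ))) ≤ 0 := by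
      have : 0 ≤ c / (2 * (n:ℝ)) := by positivity
      linarith
    have h1 : ((M * n) ^ n) ^ (-(c / (2 * (n : ℝ)))) ≤ (s n) ^ (-(c / (2 * (n : ℝ)))) :=
      Real.rpow_le_rpow_of_nonpos (hspos n) (hsub n hn) he
    have h2 : ((M * n : ℝ) ^ n) ^ (-(c / (2 * (n : ℝ)))) = (M * n) ^ (-(c/2)) := by
      rw [← Real.rpow_natCast (M * n) n, ← Real.rpow_mul hMn0.le]
      congr 1
      field_simp
    have h3 : (M * n) ^ (-(1:ℝ)) ≤ (M * n) ^ (-(c/2)) := by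
      apply Real.rpow_le_rpow_of_exponent_le hMn1
      linarith
    have h4 : (M * n) ^ (-(1:ℝ)) = 1 / (M * n) := by
      rw [Real.rpow_neg_one]; ring
    calc 1 / (M * n) = (M * n) ^ (-(1:ℝ)) := h4.symm
      _ ≤ (M * n) ^ (-(c/2)) := h3
      _ = ((M * n : ℝ) ^ n) ^ (-(c / (2 * (n : ℝ)))) := h2.symm
      _ ≤ (s n) ^ (-(c / (2 * (n : ℝ)))) := h1
  intro hsum
  have hsum2 : Summable (fun n : ℕ => 1 / (M * n)) := by
    refine Summable.of_nonneg_of_le (fun n => by positivity) ?_ hsum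
    intro n
    rcases Nat.eq_zero_or_pos n with h0 | h1
    · subst h0; simp
    · exact hterm n h1
  have hsum3 : Summable (fun n : ℕ => 1 / (n : ℝ)) := by
    have := hsum2.mul_left M
    refine this.congr ?_
    intro n
    rcases Nat.eq_zero_or_pos n with h0 | h1
    · subst h0; simp
    · have hn0 : ((n:ℝ)) ≠ 0 := by positivity
      field_simp
  exact Real.not_summable_one_div_natCast hsum3
end

section
/- Fix 0 < q < 1 and 0 ≤ b < a < 1. The probability measure μ(a,b;q) = ((a;q)_∞/(b;q)_∞) Σₖ ((b/a;q)ₖ/(q;q)ₖ) aᵏ δ_{qᵏ} on (0,1] has nth moment (a;q)ₙ/(b;q)ₙ for every n ≥ 0. -/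
open MeasureTheory Finset Filter Topology
set_option maxHeartbeats 1000000

/-- Finite q-Pochhammer symbol `(z;q)_n`. -/
noncomputable def qPoch (z q : ℝ) (n : ℕ) : ℝ := ∏ k ∈ Finset.range n, (1 - z * q ^ k)

/-- Infinite q-Pochhammer symbol `(z;q)_∞`. -/
noncomputable def qPochInf (z q : ℝ) : ℝ := ∏' k : ℕ, (1 - z * q ^ k)

section aux
variable {q x : ℝ} (hq0 : 0 < q) (hq1 : q < 1)

lemma qFactor_pos (hq0 : 0 < q) (hq1 : q < 1) (hx0 : 0 ≤ x) (hx1 : x < 1) (k : ℕ) :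
    0 < 1 - x * q ^ k := by
  have h1 : q ^ k ≤ 1 := pow_le_one₀ hq0.le hq1.le
  have h2 : x * q ^ k ≤ x * 1 := mul_le_mul_of_nonneg_left h1 hx0
  nlinarith

lemma qFactor_le_one (hq0 : 0 < q) (hx0 : 0 ≤ x) (k : ℕ) :
    1 - x * q ^ k ≤ 1 := by
  have := pow_pos hq0 k
  nlinarith

lemma qPoch_pos (hq0 : 0 < q) (hq1 : q < 1) (hx0 : 0 ≤ x) (hx1 : x < 1) (n : ℕ) :
    0 < qPoch x q n :=
  Finset.prod_pos fun k _ => qFactor_pos hq0 hq1 hx0 hx1 k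

lemma qMultipliable (hq0 : 0 < q) (hq1 : q < 1) (hx0 : 0 ≤ x) (hx1 : x < 1) :
    Multipliable (fun k : ℕ => 1 - x * q ^ k) := by
  classical
  refine ⟨⨅ s : Finset ℕ, ∏ k ∈ s, (1 - x * q ^ k), tendsto_atTop_ciInf ?_ ?_⟩
  · intro s t hst
    have h1 : (∏ k ∈ t \ s, (1 - x * q ^ k)) * ∏ k ∈ s, (1 - x * q ^ k)
        = ∏ k ∈ t, (1 - x * q ^ k) := Finset.prod_sdiff hst
    have h2 : (∏ k ∈ t \ s, (1 - x * q ^ k)) ≤ 1 :=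
      Finset.prod_le_one (fun k _ => (qFactor_pos hq0 hq1 hx0 hx1 k).le)
        (fun k _ => qFactor_le_one hq0 hx0 k)
    have h3 : 0 ≤ ∏ k ∈ s, (1 - x * q ^ k) :=
      Finset.prod_nonneg fun k _ => (qFactor_pos hq0 hq1 hx0 hx1 k).le
    nlinarith
  · refine ⟨0, ?_⟩
    rintro y ⟨s, rfl⟩
    exact Finset.prod_nonneg fun k _ => (qFactor_pos hq0 hq1 hx0 hx1 k).le

lemma qPoch_tendsto (hq0 : 0 < q) (hq1 : q < 1) (hx0 : 0 ≤ x) (hx1 : x < 1) :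
    Tendsto (fun n => qPoch x q n) atTop (𝓝 (qPochInf x q)) := by
  unfold qPoch qPochInf
  exact (qMultipliable hq0 hq1 hx0 hx1).hasProd.tendsto_prod_nat

lemma qPoch_add (x q : ℝ) (n N : ℕ) :
    qPoch x q (n + N) = qPoch x q n * qPoch (x * q ^ n) q N := by
  unfold qPoch
  rw [Finset.prod_range_add]
  congr 1
  apply Finset.prod_congr rfl
  intro k _
  rw [pow_add]
  ring

lemma qPochInf_split (hq0 : 0 < q) (hq1 : q < 1) (hx0 : 0 ≤ x) (hx1 : x < 1) (n : ℕ) :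
    qPochInf x q = qPoch x q n * qPochInf (x * q ^ n) q := by
  have hx' : 0 ≤ x * q ^ n := mul_nonneg hx0 (pow_pos hq0 n).le
  have hx'1 : x * q ^ n < 1 := by
    have h1 : q ^ n ≤ 1 := pow_le_one₀ hq0.le hq1.le
    nlinarith [pow_pos hq0 n]
  have h1 : Tendsto (fun N => qPoch x q (N + n)) atTop (𝓝 (qPochInf x q)) :=
    (qPoch_tendsto hq0 hq1 hx0 hx1).comp (Filter.tendsto_add_atTop_nat n)
  have h2 : Tendsto (fun N => qPoch x q n * qPoch (x * q ^ n) q N) atTop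
      (𝓝 (qPoch x q n * qPochInf (x * q ^ n) q)) :=
    (qPoch_tendsto hq0 hq1 hx' hx'1).const_mul _
  have heq : (fun N => qPoch x q (N + n)) = fun N => qPoch x q n * qPoch (x * q ^ n) q N := by
    funext N
    rw [Nat.add_comm N n, qPoch_add]
  rw [heq] at h1
  exact tendsto_nhds_unique h1 h2

lemma weierstrass (hq0 : 0 < q) (hq1 : q < 1) (hx0 : 0 ≤ x) (hx1 : x < 1) (s : Finset ℕ) :
    1 - ∑ k ∈ s, x * q ^ k ≤ ∏ k ∈ s, (1 - x * q ^ k) := by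
  classical
  induction s using Finset.induction with
  | empty => simp
  | @insert j s' hns ih =>
    rw [Finset.prod_insert hns, Finset.sum_insert hns]
    have ht0 : 0 ≤ x * q ^ j := mul_nonneg hx0 (pow_pos hq0 j).le
    have ht1 : 1 - x * q ^ j ≤ 1 := qFactor_le_one hq0 hx0 j
    have hP1 : ∏ k ∈ s', (1 - x * q ^ k) ≤ 1 :=
      Finset.prod_le_one (fun k _ => (qFactor_pos hq0 hq1 hx0 hx1 k).le)
        (fun k _ => qFactor_le_one hq0 hx0 k)
    have hf := qFactor_pos hq0 hq1 hx0 hx1 j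
    nlinarith

lemma qPochInf_lower (hq0 : 0 < q) (hq1 : q < 1) (hx0 : 0 ≤ x) (hx1 : x < 1) :
    1 - x / (1 - q) ≤ qPochInf x q := by
  have hgeo : Summable (fun k : ℕ => x * q ^ k) :=
    (summable_geometric_of_lt_one hq0.le hq1).mul_left x
  have hsum : ∑' k : ℕ, x * q ^ k = x / (1 - q) := by
    rw [tsum_mul_left, tsum_geometric_of_lt_one hq0.le hq1, div_eq_mul_inv]
  refine ge_of_tendsto (qMultipliable hq0 hq1 hx0 hx1).hasProd ?_
  filter_upwards with s
  calc 1 - x / (1 - q) ≤ 1 - ∑ k ∈ s, x * q ^ k := by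
        have := Summable.sum_le_tsum s (fun k _ => mul_nonneg hx0 (pow_pos hq0 k).le) hgeo
        rw [hsum] at this; linarith
    _ ≤ ∏ k ∈ s, (1 - x * q ^ k) := weierstrass hq0 hq1 hx0 hx1 s

lemma qPochInf_pos (hq0 : 0 < q) (hq1 : q < 1) (hx0 : 0 ≤ x) (hx1 : x < 1) :
    0 < qPochInf x q := by
  obtain ⟨n, hn⟩ : ∃ n : ℕ, x * q ^ n < (1 - q) / 2 := by
    have h := tendsto_pow_atTop_nhds_zero_of_lt_one hq0.le hq1
    have h2 : Tendsto (fun n : ℕ => x * q ^ n) atTop (𝓝 0) := by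
      simpa using h.const_mul x
    have := (h2.eventually (eventually_lt_nhds (by linarith : (0:ℝ) < (1 - q)/2))).exists
    exact this
  have hx' : 0 ≤ x * q ^ n := mul_nonneg hx0 (pow_pos hq0 n).le
  have hx'1 : x * q ^ n < 1 := by nlinarith
  rw [qPochInf_split hq0 hq1 hx0 hx1 n]
  have hlow := qPochInf_lower hq0 hq1 hx' hx'1
  have : 0 < 1 - (x * q ^ n) / (1 - q) := by
    rw [sub_pos, div_lt_one (by linarith)]
    linarith
  exact mul_pos (qPoch_pos hq0 hq1 hx0 hx1 n) (by linarith)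

end aux

section series
variable {q c : ℝ}

/-- Coefficients of the q-binomial series. -/
noncomputable def qA (c q : ℝ) (k : ℕ) : ℝ := qPoch c q k / qPoch q q k

lemma qA_pos (hq0 : 0 < q) (hq1 : q < 1) (hc0 : 0 ≤ c) (hc1 : c < 1) (k : ℕ) :
    0 < qA c q k :=
  div_pos (qPoch_pos hq0 hq1 hc0 hc1 k) (qPoch_pos hq0 hq1 hq0.le hq1 k)

lemma qPoch_succ (x q : ℝ) (n : ℕ) :
    qPoch x q (n + 1) = qPoch x q n * (1 - x * q ^ n) :=
  Finset.prod_range_succ _ _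

lemma qA_rec (hq0 : 0 < q) (hq1 : q < 1) (k : ℕ) :
    qA c q (k + 1) * (1 - q * q ^ k) = qA c q k * (1 - c * q ^ k) := by
  have h1 : qPoch q q k ≠ 0 := ne_of_gt (qPoch_pos hq0 hq1 hq0.le hq1 k)
  have h2 : (1 : ℝ) - q * q ^ k ≠ 0 := ne_of_gt (qFactor_pos hq0 hq1 hq0.le hq1 k)
  unfold qA
  rw [qPoch_succ, qPoch_succ]
  rw [div_mul_eq_mul_div, div_mul_eq_mul_div, mul_div_mul_right _ _ h2]

lemma qA_summable (hq0 : 0 < q) (hq1 : q < 1) (hc0 : 0 ≤ c) (hc1 : c < 1) {z : ℝ}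
    (hz0 : 0 < z) (hz1 : z < 1) :
    Summable (fun k => qA c q k * z ^ k) := by
  apply summable_of_ratio_test_tendsto_lt_one hz1
  · filter_upwards with k
    exact ne_of_gt (mul_pos (qA_pos hq0 hq1 hc0 hc1 k) (pow_pos hz0 k))
  · have key : ∀ k : ℕ, ‖qA c q (k + 1) * z ^ (k + 1)‖ / ‖qA c q k * z ^ k‖
        = z * ((1 - c * q ^ k) / (1 - q * q ^ k)) := by
      intro k
      have hA1 := qA_pos hq0 hq1 hc0 hc1 (k + 1)
      have hAk := qA_pos hq0 hq1 hc0 hc1 k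
      have hqf := qFactor_pos hq0 hq1 hq0.le hq1 k
      have hrec := qA_rec (c := c) hq0 hq1 k
      have hA1eq : qA c q (k + 1) = qA c q k * (1 - c * q ^ k) / (1 - q * q ^ k) := by
        rw [eq_div_iff (ne_of_gt hqf)]
        exact hrec
      rw [Real.norm_eq_abs, Real.norm_eq_abs,
        abs_of_pos (mul_pos hA1 (pow_pos hz0 _)), abs_of_pos (mul_pos hAk (pow_pos hz0 _)),
        hA1eq, pow_succ]
      field_simp
    simp_rw [key]
    have t1 : Tendsto (fun k : ℕ => 1 - c * q ^ k) atTop (𝓝 1) := by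
      have := (tendsto_pow_atTop_nhds_zero_of_lt_one hq0.le hq1).const_mul c
      simpa using (tendsto_const_nhds (x := (1:ℝ))).sub this
    have t2 : Tendsto (fun k : ℕ => 1 - q * q ^ k) atTop (𝓝 1) := by
      have := (tendsto_pow_atTop_nhds_zero_of_lt_one hq0.le hq1).const_mul q
      simpa using (tendsto_const_nhds (x := (1:ℝ))).sub this
    have t3 : Tendsto (fun k : ℕ => (1 - c * q ^ k) / (1 - q * q ^ k)) atTop (𝓝 1) := by
      have t3' := t1.div t2 one_ne_zero
      rw [div_one] at t3'
      exact t3'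
    simpa using t3.const_mul z

/-- The q-binomial series. -/
noncomputable def qF (c q z : ℝ) : ℝ := ∑' k, qA c q k * z ^ k

lemma qF_funeq (hq0 : 0 < q) (hq1 : q < 1) (hc0 : 0 ≤ c) (hc1 : c < 1) {z : ℝ}
    (hz0 : 0 < z) (hz1 : z < 1) :
    (1 - z) * qF c q z = (1 - c * z) * qF c q (q * z) := by
  have hqz0 : 0 < q * z := mul_pos hq0 hz0
  have hqz1 : q * z < 1 := by nlinarith
  have h1 := (qA_summable hq0 hq1 hc0 hc1 hz0 hz1).hasSum
  have h2 := (qA_summable hq0 hq1 hc0 hc1 hqz0 hqz1).hasSum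
  have S1 := h1.sub h2
  have S2 := (h1.mul_left z).sub (h2.mul_left (c * z))
  have hfun : (fun k => z * (qA c q k * z ^ k) - c * z * (qA c q k * (q * z) ^ k))
      = fun k => (qA c q (k + 1) * z ^ (k + 1) - qA c q (k + 1) * (q * z) ^ (k + 1)) := by
    funext k
    have hrec := qA_rec (c := c) hq0 hq1 k
    linear_combination (-(z ^ (k + 1))) * hrec
  rw [hfun] at S2
  have S2' := (hasSum_nat_add_iff (f := fun k => qA c q k * z ^ k - qA c q k * (q * z) ^ k) 1).mp S2
  have hzero : ∑ i ∈ range 1, (qA c q i * z ^ i - qA c q i * (q * z) ^ i) = 0 := by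
    simp
  rw [hzero, add_zero] at S2'
  have := S1.unique S2'
  unfold qF
  linarith [this]

lemma qF_iter (hq0 : 0 < q) (hq1 : q < 1) (hc0 : 0 ≤ c) (hc1 : c < 1) {z : ℝ}
    (hz0 : 0 < z) (hz1 : z < 1) (N : ℕ) :
    qF c q z * qPoch z q N = qF c q (q ^ N * z) * qPoch (c * z) q N := by
  induction N with
  | zero => simp [qPoch]
  | succ N ih =>
    have hz0' : 0 < q ^ N * z := mul_pos (pow_pos hq0 N) hz0
    have hz1' : q ^ N * z < 1 := by
      have h1 : q ^ N ≤ 1 := pow_le_one₀ hq0.le hq1.le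
      nlinarith [pow_pos hq0 N]
    have step := qF_funeq hq0 hq1 hc0 hc1 hz0' hz1'
    have harg : q ^ (N + 1) * z = q * (q ^ N * z) := by ring
    rw [qPoch_succ, qPoch_succ, harg]
    linear_combination (1 - z * q ^ N) * ih + qPoch (c * z) q N * step

lemma qA_zero : qA c q 0 = 1 := by simp [qA, qPoch]

lemma qF_tendsto_one (hq0 : 0 < q) (hq1 : q < 1) (hc0 : 0 ≤ c) (hc1 : c < 1) {z : ℝ}
    (hz0 : 0 < z) (hz1 : z < 1) :
    Tendsto (fun N : ℕ => qF c q (q ^ N * z)) atTop (𝓝 1) := by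
  have hsz := qA_summable hq0 hq1 hc0 hc1 hz0 hz1
  have hsz' : Summable (fun k => qA c q (k + 1) * z ^ (k + 1)) :=
    (summable_nat_add_iff 1).mpr hsz
  have hw0 : ∀ N : ℕ, 0 < q ^ N * z := fun N => mul_pos (pow_pos hq0 N) hz0
  have hw1 : ∀ N : ℕ, q ^ N * z < 1 := fun N => by
    have h1 : q ^ N ≤ 1 := pow_le_one₀ hq0.le hq1.le
    nlinarith [pow_pos hq0 N]
  have hdecomp : ∀ N : ℕ, qF c q (q ^ N * z)
      = 1 + ∑' k, qA c q (k + 1) * (q ^ N * z) ^ (k + 1) := by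
    intro N
    have hs := qA_summable hq0 hq1 hc0 hc1 (hw0 N) (hw1 N)
    unfold qF
    rw [Summable.tsum_eq_zero_add hs, qA_zero]
    norm_num
  have hsum' : ∀ N : ℕ, Summable (fun k => qA c q (k + 1) * (q ^ N * z) ^ (k + 1)) := fun N =>
    (summable_nat_add_iff 1).mpr (qA_summable hq0 hq1 hc0 hc1 (hw0 N) (hw1 N))
  have hRle : ∀ N : ℕ, (∑' k, qA c q (k + 1) * (q ^ N * z) ^ (k + 1))
      ≤ q ^ N * ∑' k, qA c q (k + 1) * z ^ (k + 1) := by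
    intro N
    rw [← tsum_mul_left]
    refine Summable.tsum_le_tsum (fun k => ?_) (hsum' N) (hsz'.mul_left _)
    have hA := (qA_pos hq0 hq1 hc0 hc1 (k + 1)).le
    have h1 : (q ^ N * z) ^ (k + 1) = (q ^ N) ^ (k + 1) * z ^ (k + 1) := mul_pow _ _ _
    have h2 : (q ^ N) ^ (k + 1) ≤ (q ^ N) ^ 1 :=
      pow_le_pow_of_le_one (pow_pos hq0 N).le (pow_le_one₀ hq0.le hq1.le) (by omega)
    rw [h1, pow_one] at *
    have h3 : 0 ≤ z ^ (k + 1) := (pow_pos hz0 _).le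
    calc qA c q (k + 1) * ((q ^ N) ^ (k + 1) * z ^ (k + 1))
        ≤ qA c q (k + 1) * (q ^ N * z ^ (k + 1)) := by
          apply mul_le_mul_of_nonneg_left _ hA
          exact mul_le_mul_of_nonneg_right h2 h3
      _ = q ^ N * (qA c q (k + 1) * z ^ (k + 1)) := by ring
  have hRnonneg : ∀ N : ℕ, 0 ≤ ∑' k, qA c q (k + 1) * (q ^ N * z) ^ (k + 1) := by
    intro N
    exact tsum_nonneg fun k => (mul_pos (qA_pos hq0 hq1 hc0 hc1 (k + 1))
      (pow_pos (hw0 N) (k + 1))).le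
  have hbound : Tendsto (fun N : ℕ => q ^ N * ∑' k, qA c q (k + 1) * z ^ (k + 1)) atTop (𝓝 0) := by
    simpa using (tendsto_pow_atTop_nhds_zero_of_lt_one hq0.le hq1).mul_const
      (∑' k, qA c q (k + 1) * z ^ (k + 1))
  have hR0 : Tendsto (fun N : ℕ => ∑' k, qA c q (k + 1) * (q ^ N * z) ^ (k + 1)) atTop (𝓝 0) :=
    squeeze_zero hRnonneg hRle hbound
  have := hR0.const_add (1 : ℝ)
  rw [add_zero] at this
  simp_rw [hdecomp]
  exact this

lemma qF_eq (hq0 : 0 < q) (hq1 : q < 1) (hc0 : 0 ≤ c) (hc1 : c < 1) {z : ℝ}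
    (hz0 : 0 < z) (hz1 : z < 1) :
    qF c q z * qPochInf z q = qPochInf (c * z) q := by
  have hcz0 : 0 ≤ c * z := mul_nonneg hc0 hz0.le
  have hcz1 : c * z < 1 := by nlinarith
  have hL : Tendsto (fun N : ℕ => qF c q z * qPoch z q N) atTop
      (𝓝 (qF c q z * qPochInf z q)) :=
    (qPoch_tendsto hq0 hq1 hz0.le hz1).const_mul _
  have hR : Tendsto (fun N : ℕ => qF c q (q ^ N * z) * qPoch (c * z) q N) atTop
      (𝓝 (1 * qPochInf (c * z) q)) :=
    (qF_tendsto_one hq0 hq1 hc0 hc1 hz0 hz1).mul (qPoch_tendsto hq0 hq1 hcz0 hcz1)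
  rw [one_mul] at hR
  have heq : (fun N : ℕ => qF c q z * qPoch z q N)
      = fun N : ℕ => qF c q (q ^ N * z) * qPoch (c * z) q N := by
    funext N
    exact qF_iter hq0 hq1 hc0 hc1 hz0 hz1 N
  rw [heq] at hL
  exact tendsto_nhds_unique hL hR

end series

section measure_calc
open MeasureTheory

lemma integral_pow_sum_smul_dirac {q : ℝ} (hq0 : 0 < q) (r : ℕ → ℝ) (hr : ∀ k, 0 ≤ r k)
    (n : ℕ) (hsum : Summable fun k => r k * (q ^ k) ^ n) :
    ∫ x, x ^ n ∂(Measure.sum fun k : ℕ =>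
        (ENNReal.ofReal (r k)) • Measure.dirac ((q : ℝ) ^ k)) = ∑' k, r k * (q ^ k) ^ n := by
  have hmeas : Measurable fun x : ℝ => x ^ n := measurable_id.pow_const n
  have hlint : ∀ k : ℕ, ∫⁻ x, ‖x ^ n‖ₑ ∂((ENNReal.ofReal (r k)) • Measure.dirac ((q : ℝ) ^ k))
      = ENNReal.ofReal (r k * (q ^ k) ^ n) := by
    intro k
    rw [lintegral_smul_measure, lintegral_dirac' _ (hmeas.enorm),
      Real.enorm_eq_ofReal (pow_nonneg (pow_pos hq0 k).le n), smul_eq_mul,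
      ← ENNReal.ofReal_mul (hr k)]
  have hint : Integrable (fun x : ℝ => x ^ n) (Measure.sum fun k : ℕ =>
      (ENNReal.ofReal (r k)) • Measure.dirac ((q : ℝ) ^ k)) := by
    refine ⟨hmeas.aestronglyMeasurable, ?_⟩
    have : (∫⁻ x, ‖x ^ n‖ₑ ∂(Measure.sum fun k : ℕ =>
        (ENNReal.ofReal (r k)) • Measure.dirac ((q : ℝ) ^ k)))
        = ∑' k, ENNReal.ofReal (r k * (q ^ k) ^ n) := by
      rw [lintegral_sum_measure]
      exact tsum_congr hlint
    rw [MeasureTheory.HasFiniteIntegral, this,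
      ← ENNReal.ofReal_tsum_of_nonneg (fun k => mul_nonneg (hr k)
        (pow_nonneg (pow_pos hq0 k).le n)) hsum]
    exact ENNReal.ofReal_lt_top
  rw [integral_sum_measure hint]
  apply tsum_congr
  intro k
  rw [integral_smul_measure, integral_dirac, ENNReal.toReal_ofReal (hr k), smul_eq_mul]

end measure_calc

theorem qBeta_measure_moments (q a b : ℝ) (hq0 : 0 < q) (hq1 : q < 1)
    (hb : 0 ≤ b) (hba : b < a) (ha1 : a < 1) :
    ∀ n : ℕ,
      ∫ x, x ^ n ∂(Measure.sum fun k : ℕ =>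
          (ENNReal.ofReal ((qPochInf a q / qPochInf b q) *
            (qPoch (b / a) q k / qPoch q q k) * a ^ k)) • Measure.dirac ((q : ℝ) ^ k)) =
        qPoch a q n / qPoch b q n := by
  intro n
  have ha0 : 0 < a := lt_of_le_of_lt hb hba
  have hb1 : b < 1 := hba.trans ha1
  have hc0 : 0 ≤ b / a := div_nonneg hb ha0.le
  have hc1 : b / a < 1 := (div_lt_one ha0).mpr hba
  have hPa := qPochInf_pos hq0 hq1 ha0.le ha1
  have hPb := qPochInf_pos hq0 hq1 hb hb1
  set C : ℝ := qPochInf a q / qPochInf b q with hC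
  have hCpos : 0 < C := div_pos hPa hPb
  set z : ℝ := a * q ^ n with hz
  have hz0 : 0 < z := mul_pos ha0 (pow_pos hq0 n)
  have hz1 : z < 1 := by
    have h1 : q ^ n ≤ 1 := pow_le_one₀ hq0.le hq1.le
    have := pow_pos hq0 n
    rw [hz]; nlinarith
  have hsumz : Summable (fun k => qA (b / a) q k * z ^ k) :=
    qA_summable hq0 hq1 hc0 hc1 hz0 hz1
  set r : ℕ → ℝ := fun k => C * (qPoch (b / a) q k / qPoch q q k) * a ^ k with hr
  have hrA : ∀ k, r k = C * qA (b / a) q k * a ^ k := fun k => rfl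
  have hrpos : ∀ k, 0 ≤ r k := by
    intro k
    rw [hrA]
    exact (mul_pos (mul_pos hCpos (qA_pos hq0 hq1 hc0 hc1 k)) (pow_pos ha0 k)).le
  have hrz : ∀ k, r k * ((q : ℝ) ^ k) ^ n = C * (qA (b / a) q k * z ^ k) := by
    intro k
    rw [hrA, hz, mul_pow, ← pow_mul, ← pow_mul, Nat.mul_comm n k]
    ring
  have hsumr : Summable fun k => r k * ((q : ℝ) ^ k) ^ n := by
    simp_rw [hrz]
    exact hsumz.mul_left C
  rw [integral_pow_sum_smul_dirac hq0 r hrpos n hsumr]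
  have htsum : ∑' k, r k * ((q : ℝ) ^ k) ^ n = C * qF (b / a) q z := by
    rw [qF, ← tsum_mul_left]
    exact tsum_congr hrz
  rw [htsum]
  -- Now the q-binomial evaluation
  have hPa' := qPochInf_pos hq0 hq1 (mul_nonneg ha0.le (pow_pos hq0 n).le)
    (by rw [← hz]; exact hz1)
  have hbz0 : 0 ≤ b * q ^ n := mul_nonneg hb (pow_pos hq0 n).le
  have hbz1 : b * q ^ n < 1 := by
    have h1 : q ^ n ≤ 1 := pow_le_one₀ hq0.le hq1.le
    nlinarith [pow_pos hq0 n]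
  have hPb' := qPochInf_pos hq0 hq1 hbz0 hbz1
  have h1 : qF (b / a) q z * qPochInf z q = qPochInf (b * q ^ n) q := by
    have := qF_eq hq0 hq1 hc0 hc1 hz0 hz1
    rwa [show b / a * z = b * q ^ n by rw [hz]; field_simp] at this
  have h2 : qPochInf a q = qPoch a q n * qPochInf z q := by
    rw [hz]; exact qPochInf_split hq0 hq1 ha0.le ha1 n
  have h3 : qPochInf b q = qPoch b q n * qPochInf (b * q ^ n) q :=
    qPochInf_split hq0 hq1 hb hb1 n
  have hPzq : 0 < qPochInf z q := hPa'
  have hPbn : 0 < qPoch b q n := qPoch_pos hq0 hq1 hb hb1 n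
  have hqF : qF (b / a) q z = qPochInf (b * q ^ n) q / qPochInf z q := by
    rw [eq_div_iff hPzq.ne', h1]
  rw [hC, h2, h3, hqF]
  field_simp
end
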